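/- arXiv:1311.5945 — 4 statements merged into one kernel-verified Lean document; each statement's English description precedes it below -/
import Mathlib

section
/- Let $A \subseteq \{0,1\}^n$ be a nonempty monotone set. Then for every nonempty subset $B \subseteq A$ with $|B| \le |A|/2$, the edge-boundary of $B$ inside $A$, namely $\partial_E B = \{(x,y) : x \in B,\ y \in A \setminus B,\ x \text{ and } y \text{ differ in exactly one coordinate}\}$, satisfies $\frac{|\partial_E B|}{n\,|B|} \ge \frac{\mathbb{P}[A]}{16 n}$, where $\mathbb{P}[A] = |A|/2^n$. In particular, the conductance of the graph on $A$ induced from the hypercube (with self-loops added so every vertex has degree $n$) is at least $\mathbb{P}[A]/(16n)$. -/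
/-- Two vertices of the hypercube `{0,1}^n` are adjacent iff they differ
in exactly one coordinate. -/
abbrev adjacent {n : ℕ} (x y : Fin n → Bool) : Prop :=
  (Finset.univ.filter fun i => x i ≠ y i).card = 1

/-- A set `A ⊆ {0,1}^n` is monotone if `x ∈ A` and `x ≤ y` (coordinatewise)
imply `y ∈ A`. -/
def IsMonotoneSet {n : ℕ} (A : Finset (Fin n → Bool)) : Prop :=
  ∀ x ∈ A, ∀ y : Fin n → Bool, (∀ i, x i ≤ y i) → y ∈ A

open Finset

/-- The (directed) edge boundary of `B` inside `A`. -/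
private def cutP {n : ℕ} (A B : Finset (Fin n → Bool)) :
    Finset ((Fin n → Bool) × (Fin n → Bool)) :=
  (B ×ˢ (A \ B)).filter fun p => adjacent p.1 p.2

private lemma mem_cutP {n : ℕ} {A B : Finset (Fin n → Bool)} {p} :
    p ∈ cutP A B ↔ p.1 ∈ B ∧ (p.2 ∈ A ∧ p.2 ∉ B) ∧ adjacent p.1 p.2 := by
  simp [cutP, Finset.mem_filter, Finset.mem_product, Finset.mem_sdiff, and_assoc]

/-- The slice of `S ⊆ {0,1}^{n+1}` at last coordinate `b`. -/
private def bslice {n : ℕ} (S : Finset (Fin (n+1) → Bool)) (b : Bool) :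
    Finset (Fin n → Bool) :=
  Finset.univ.filter fun z => Fin.snoc z b ∈ S

private lemma mem_bslice {n : ℕ} {S : Finset (Fin (n+1) → Bool)} {b : Bool}
    {z : Fin n → Bool} : z ∈ bslice S b ↔ Fin.snoc z b ∈ S := by
  simp [bslice]

private lemma card_cube (n : ℕ) : Fintype.card (Fin n → Bool) = 2 ^ n := by
  simp [Fintype.card_fun]

private lemma diffcard_snoc {n : ℕ} (z w : Fin n → Bool) (b b' : Bool) :
    (Finset.univ.filter fun i =>
        (Fin.snoc z b : Fin (n+1) → Bool) i ≠ (Fin.snoc w b' : Fin (n+1) → Bool) i).card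
      = (Finset.univ.filter fun i => z i ≠ w i).card + (if b ≠ b' then 1 else 0) := by
  rw [Finset.card_filter, Finset.card_filter, Fin.sum_univ_castSucc]
  simp [Fin.snoc_castSucc, Fin.snoc_last]

private lemma adjacent_snoc_same {n : ℕ} {z w : Fin n → Bool} (b : Bool) :
    adjacent (Fin.snoc z b) (Fin.snoc w b) ↔ adjacent z w := by
  unfold adjacent
  rw [diffcard_snoc]
  simp

private lemma adjacent_snoc_diff {n : ℕ} {z w : Fin n → Bool} {b b' : Bool} (h : b ≠ b') :
    adjacent (Fin.snoc z b) (Fin.snoc w b') ↔ z = w := by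
  unfold adjacent
  rw [diffcard_snoc, if_pos h]
  constructor
  · intro h1
    have h2 : (Finset.univ.filter fun i => z i ≠ w i).card = 0 := by omega
    have h3 := Finset.card_eq_zero.mp h2
    funext i
    by_contra hne
    have hmem : i ∈ Finset.univ.filter fun i => z i ≠ w i := by simp [hne]
    rw [h3] at hmem
    exact absurd hmem (Finset.notMem_empty i)
  · rintro rfl
    simp

private lemma snoc_inj {n : ℕ} {z w : Fin n → Bool} {b : Bool}
    (h : Fin.snoc z b = (Fin.snoc w b : Fin (n+1) → Bool)) : z = w := by
  funext i
  have := congrFun h (Fin.castSucc i)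
  simpa [Fin.snoc_castSucc] using this

private lemma snoc_le {n : ℕ} (z : Fin n → Bool) :
    ∀ i, (Fin.snoc z false : Fin (n+1) → Bool) i ≤ (Fin.snoc z true : Fin (n+1) → Bool) i := by
  intro i
  refine Fin.lastCases ?_ ?_ i
  · simp [Fin.snoc_last]
  · intro j
    simp [Fin.snoc_castSucc]

private lemma isMonotoneSet_bslice {n : ℕ} {A : Finset (Fin (n+1) → Bool)}
    (hA : IsMonotoneSet A) (b : Bool) : IsMonotoneSet (bslice A b) := by
  intro z hz w hw
  rw [mem_bslice] at hz ⊢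
  refine hA _ hz _ ?_
  intro i
  refine Fin.lastCases ?_ ?_ i
  · simp [Fin.snoc_last]
  · intro j
    simpa [Fin.snoc_castSucc] using hw j

private lemma bslice_subset {n : ℕ} {A B : Finset (Fin (n+1) → Bool)}
    (hBA : B ⊆ A) (b : Bool) : bslice B b ⊆ bslice A b := by
  intro z hz
  rw [mem_bslice] at hz ⊢
  exact hBA hz

private lemma bslice_sdiff {n : ℕ} (A B : Finset (Fin (n+1) → Bool)) (b : Bool) :
    bslice (A \ B) b = bslice A b \ bslice B b := by
  ext z
  simp [bslice, Finset.mem_sdiff]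

private lemma card_bslice {n : ℕ} (S : Finset (Fin (n+1) → Bool)) (b : Bool) :
    (bslice S b).card = (S.filter fun x => x (Fin.last n) = b).card := by
  classical
  apply Finset.card_bij (fun z _ => (Fin.snoc z b : Fin (n+1) → Bool))
  · intro z hz
    rw [mem_bslice] at hz
    simp [Finset.mem_filter, hz, Fin.snoc_last]
  · intro z1 h1 z2 h2 he
    exact snoc_inj he
  · intro x hx
    rw [Finset.mem_filter] at hx
    refine ⟨Fin.init x, ?_, ?_⟩
    · rw [mem_bslice, ← hx.2, Fin.snoc_init_self]
      exact hx.1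
    · rw [← hx.2, Fin.snoc_init_self]

private lemma card_split {n : ℕ} (S : Finset (Fin (n+1) → Bool)) :
    S.card = (bslice S false).card + (bslice S true).card := by
  classical
  rw [card_bslice S false, card_bslice S true]
  rw [← Finset.card_filter_add_card_filter_not
    (s := S) (p := fun x => x (Fin.last n) = false)]
  congr 1
  apply congrArg Finset.card
  apply Finset.filter_congr
  intro x _
  cases h : x (Fin.last n) <;> simp [h]

private lemma cutP_filter_same {n : ℕ} (A B : Finset (Fin (n+1) → Bool)) (b : Bool) :
    ((cutP A B).filter fun p => p.1 (Fin.last n) = b ∧ p.2 (Fin.last n) = b).card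
      = (cutP (bslice A b) (bslice B b)).card := by
  classical
  symm
  apply Finset.card_bij
    (fun q _ => ((Fin.snoc q.1 b : Fin (n+1) → Bool), (Fin.snoc q.2 b : Fin (n+1) → Bool)))
  · rintro ⟨q1, q2⟩ hq
    rw [mem_cutP] at hq
    obtain ⟨hq1, ⟨hq2, hq3⟩, hq4⟩ := hq
    rw [mem_bslice] at hq1 hq2 hq3
    rw [Finset.mem_filter, mem_cutP]
    refine ⟨⟨hq1, ⟨hq2, hq3⟩, ?_⟩, ?_, ?_⟩
    · exact (adjacent_snoc_same b).mpr hq4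
    · simp [Fin.snoc_last]
    · simp [Fin.snoc_last]
  · rintro ⟨q1, q2⟩ h1 ⟨q3, q4⟩ h2 he
    rw [Prod.mk.injEq] at he
    rw [Prod.mk.injEq]
    exact ⟨snoc_inj he.1, snoc_inj he.2⟩
  · rintro ⟨p1, p2⟩ hp
    rw [Finset.mem_filter, mem_cutP] at hp
    obtain ⟨⟨hp1, ⟨hp2, hp3⟩, hp4⟩, hL1, hL2⟩ := hp
    simp only at hL1 hL2 hp1 hp2 hp3 hp4
    have e1 : Fin.snoc (Fin.init p1) b = p1 := by rw [← hL1]; exact Fin.snoc_init_self p1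
    have e2 : Fin.snoc (Fin.init p2) b = p2 := by rw [← hL2]; exact Fin.snoc_init_self p2
    refine ⟨(Fin.init p1, Fin.init p2), ?_, ?_⟩
    · rw [mem_cutP]
      refine ⟨?_, ⟨?_, ?_⟩, ?_⟩
      · rw [mem_bslice]; simp only; rw [e1]; exact hp1
      · rw [mem_bslice]; simp only; rw [e2]; exact hp2
      · rw [mem_bslice]; simp only; rw [e2]; exact hp3
      · apply (adjacent_snoc_same b).mp
        simp only
        rw [e1, e2]; exact hp4
    · rw [Prod.mk.injEq]
      exact ⟨e1, e2⟩

private lemma cutP_filter_diff {n : ℕ} (A B : Finset (Fin (n+1) → Bool)) (b b' : Bool)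
    (hbb : b ≠ b') :
    ((cutP A B).filter fun p => p.1 (Fin.last n) = b ∧ p.2 (Fin.last n) = b').card
      = ((bslice B b) ∩ (bslice A b' \ bslice B b')).card := by
  classical
  symm
  apply Finset.card_bij
    (fun z _ => ((Fin.snoc z b : Fin (n+1) → Bool), (Fin.snoc z b' : Fin (n+1) → Bool)))
  · intro z hz
    rw [Finset.mem_inter, Finset.mem_sdiff] at hz
    obtain ⟨hz1, hz2, hz3⟩ := hz
    rw [mem_bslice] at hz1 hz2 hz3
    rw [Finset.mem_filter, mem_cutP]
    refine ⟨⟨hz1, ⟨hz2, hz3⟩, ?_⟩, ?_, ?_⟩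
    · exact (adjacent_snoc_diff hbb).mpr rfl
    · simp [Fin.snoc_last]
    · simp [Fin.snoc_last]
  · intro z1 h1 z2 h2 he
    rw [Prod.mk.injEq] at he
    exact snoc_inj he.1
  · rintro ⟨p1, p2⟩ hp
    rw [Finset.mem_filter, mem_cutP] at hp
    obtain ⟨⟨hp1, ⟨hp2, hp3⟩, hp4⟩, hL1, hL2⟩ := hp
    simp only at hL1 hL2 hp1 hp2 hp3 hp4
    have e1 : Fin.snoc (Fin.init p1) b = p1 := by rw [← hL1]; exact Fin.snoc_init_self p1
    have e2 : Fin.snoc (Fin.init p2) b' = p2 := by rw [← hL2]; exact Fin.snoc_init_self p2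
    have hzz : Fin.init p1 = Fin.init p2 := by
      apply (adjacent_snoc_diff hbb).mp
      rw [e1, e2]; exact hp4
    refine ⟨Fin.init p1, ?_, ?_⟩
    · rw [Finset.mem_inter, Finset.mem_sdiff, mem_bslice, mem_bslice, mem_bslice]
      refine ⟨by rw [e1]; exact hp1, ?_, ?_⟩
      · rw [hzz, e2]; exact hp2
      · rw [hzz, e2]; exact hp3
    · rw [Prod.mk.injEq]
      refine ⟨e1, ?_⟩
      rw [hzz, e2]

private lemma cut_split {n : ℕ} (A B : Finset (Fin (n+1) → Bool)) :
    (cutP A B).card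
      = (cutP (bslice A false) (bslice B false)).card
      + (cutP (bslice A true) (bslice B true)).card
      + ((bslice B false) ∩ (bslice A true \ bslice B true)).card
      + ((bslice B true) ∩ (bslice A false \ bslice B false)).card := by
  classical
  have h1 := Finset.card_filter_add_card_filter_not
    (s := cutP A B) (p := fun p => p.1 (Fin.last n) = false)
  have h2 := Finset.card_filter_add_card_filter_not
    (s := (cutP A B).filter (fun p => p.1 (Fin.last n) = false))
    (p := fun p => p.2 (Fin.last n) = false)
  have h3 := Finset.card_filter_add_card_filter_not
    (s := (cutP A B).filter (fun p => ¬ p.1 (Fin.last n) = false))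
    (p := fun p => p.2 (Fin.last n) = true)
  rw [Finset.filter_filter, Finset.filter_filter] at h2
  rw [Finset.filter_filter, Finset.filter_filter] at h3
  have c2 : (cutP A B).filter (fun p => p.1 (Fin.last n) = false ∧ ¬ p.2 (Fin.last n) = false)
      = (cutP A B).filter (fun p => p.1 (Fin.last n) = false ∧ p.2 (Fin.last n) = true) := by
    apply Finset.filter_congr
    intro p _
    cases h : p.2 (Fin.last n) <;> simp [h]
  have c3 : (cutP A B).filter (fun p => ¬ p.1 (Fin.last n) = false ∧ p.2 (Fin.last n) = true)
      = (cutP A B).filter (fun p => p.1 (Fin.last n) = true ∧ p.2 (Fin.last n) = true) := by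
    apply Finset.filter_congr
    intro p _
    cases h : p.1 (Fin.last n) <;> simp [h]
  have c4 : (cutP A B).filter (fun p => ¬ p.1 (Fin.last n) = false ∧ ¬ p.2 (Fin.last n) = true)
      = (cutP A B).filter (fun p => p.1 (Fin.last n) = true ∧ p.2 (Fin.last n) = false) := by
    apply Finset.filter_congr
    intro p _
    cases h : p.1 (Fin.last n) <;> cases h' : p.2 (Fin.last n) <;> simp [h, h']
  rw [c2] at h2
  rw [c3, c4] at h3
  rw [cutP_filter_same A B false, cutP_filter_diff A B false true (by simp)] at h2
  rw [cutP_filter_same A B true, cutP_filter_diff A B true false (by simp)] at h3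
  omega

private lemma arith (N b0 b1 c0 c1 e0 e1 v1 v2 : ℕ)
    (h0 : 2 * b0 * c0 ≤ N * e0) (h1 : 2 * b1 * c1 ≤ N * e1)
    (hv1 : b0 ≤ b1 + v1) (hv2 : c0 ≤ c1 + v2)
    (hb1 : b1 ≤ N) (hc1 : c1 ≤ N) :
    2 * (b0 + b1) * (c0 + c1) ≤ 2 * N * (e0 + e1 + v1 + v2) := by
  have key : b0 * c1 + b1 * c0 ≤ b0 * c0 + b1 * c1 + N * v1 + N * v2 := by
    rcases le_total c0 c1 with hc | hc
    · rcases le_total b0 b1 with hb | hb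
      · obtain ⟨d, rfl⟩ := Nat.exists_eq_add_of_le hb
        have hdc : d * c0 ≤ d * c1 := Nat.mul_le_mul (le_refl d) hc
        nlinarith [hdc]
      · obtain ⟨d, rfl⟩ := Nat.exists_eq_add_of_le hb
        have hd : d ≤ v1 := by omega
        have hcN : c1 ≤ c0 + N := by omega
        have h3 : d * c1 ≤ d * c0 + d * N := by
          calc d * c1 ≤ d * (c0 + N) := Nat.mul_le_mul (le_refl d) hcN
            _ = d * c0 + d * N := by ring
        have h4 : d * N ≤ v1 * N := Nat.mul_le_mul hd (le_refl N)
        nlinarith [h3, h4]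
    · obtain ⟨d, rfl⟩ := Nat.exists_eq_add_of_le hc
      have hd : d ≤ v2 := by omega
      have h3 : b1 * d ≤ N * d := Nat.mul_le_mul hb1 (le_refl d)
      have h4 : N * d ≤ N * v2 := Nat.mul_le_mul (le_refl N) hd
      nlinarith [h3, h4]
  nlinarith [key, h0, h1]

/-- Core lemma: for monotone `A` and any `B ⊆ A`,
`2 |B| |A \ B| ≤ 2^n |∂_E B|`. -/
private lemma core (n : ℕ) : ∀ A B : Finset (Fin n → Bool),
    IsMonotoneSet A → B ⊆ A →
    2 * B.card * (A \ B).card ≤ 2 ^ n * (cutP A B).card := by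
  induction n with
  | zero =>
    intro A B hA hBA
    have h2 := Finset.card_sdiff_add_card_eq_card hBA
    have h1 : A.card ≤ 1 := by
      have h := Finset.card_le_univ A
      rw [card_cube] at h
      simpa using h
    have hz : B.card = 0 ∨ (A \ B).card = 0 := by omega
    rcases hz with h | h <;> simp [h]
  | succ n ih =>
    intro A B hA hBA
    have hA0 : IsMonotoneSet (bslice A false) := isMonotoneSet_bslice hA false
    have hA1 : IsMonotoneSet (bslice A true) := isMonotoneSet_bslice hA true
    have hB0A : bslice B false ⊆ bslice A false := bslice_subset hBA false
    have hB1A : bslice B true ⊆ bslice A true := bslice_subset hBA true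
    have h0 := ih (bslice A false) (bslice B false) hA0 hB0A
    have h1 := ih (bslice A true) (bslice B true) hA1 hB1A
    have hsB := card_split B
    have hsC : (A \ B).card = (bslice A false \ bslice B false).card
        + (bslice A true \ bslice B true).card := by
      rw [card_split (A \ B), bslice_sdiff, bslice_sdiff]
    have hcut := cut_split A B
    have hv1 : (bslice B false).card ≤ (bslice B true).card
        + ((bslice B false) ∩ (bslice A true \ bslice B true)).card := by
      have hsub : bslice B false ⊆ bslice B true
          ∪ ((bslice B false) ∩ (bslice A true \ bslice B true)) := by
        intro z hz
        have hzB : Fin.snoc z false ∈ B := mem_bslice.mp hz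
        have hzA : Fin.snoc z true ∈ A := hA _ (hBA hzB) _ (snoc_le z)
        by_cases hzt : z ∈ bslice B true
        · exact Finset.mem_union_left _ hzt
        · exact Finset.mem_union_right _ (Finset.mem_inter.mpr
            ⟨hz, Finset.mem_sdiff.mpr ⟨mem_bslice.mpr hzA, hzt⟩⟩)
      calc (bslice B false).card ≤ _ := Finset.card_le_card hsub
        _ ≤ _ := Finset.card_union_le _ _
    have hv2 : (bslice A false \ bslice B false).card
        ≤ (bslice A true \ bslice B true).card
        + ((bslice B true) ∩ (bslice A false \ bslice B false)).card := by
      have hsub : (bslice A false \ bslice B false) ⊆ (bslice A true \ bslice B true)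
          ∪ ((bslice B true) ∩ (bslice A false \ bslice B false)) := by
        intro z hz
        have hz' := Finset.mem_sdiff.mp hz
        have hzA : Fin.snoc z true ∈ A := hA _ (mem_bslice.mp hz'.1) _ (snoc_le z)
        by_cases hzt : z ∈ bslice B true
        · exact Finset.mem_union_right _ (Finset.mem_inter.mpr ⟨hzt, hz⟩)
        · exact Finset.mem_union_left _ (Finset.mem_sdiff.mpr
            ⟨mem_bslice.mpr hzA, hzt⟩)
      calc (bslice A false \ bslice B false).card ≤ _ := Finset.card_le_card hsub
        _ ≤ _ := Finset.card_union_le _ _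
    have hb1 : (bslice B true).card ≤ 2 ^ n := by
      have h := Finset.card_le_univ (bslice B true)
      rwa [card_cube] at h
    have hc1 : (bslice A true \ bslice B true).card ≤ 2 ^ n := by
      have h := Finset.card_le_univ (bslice A true \ bslice B true)
      rwa [card_cube] at h
    have harith := arith (2 ^ n) (bslice B false).card (bslice B true).card
      (bslice A false \ bslice B false).card (bslice A true \ bslice B true).card
      (cutP (bslice A false) (bslice B false)).card (cutP (bslice A true) (bslice B true)).card
      ((bslice B false) ∩ (bslice A true \ bslice B true)).card
      ((bslice B true) ∩ (bslice A false \ bslice B false)).card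
      h0 h1 hv1 hv2 hb1 hc1
    rw [hsB, hsC, hcut, pow_succ, Nat.mul_comm (2 ^ n) 2]
    exact harith

/-- For a nonempty monotone `A ⊆ {0,1}^n` and nonempty `B ⊆ A` with
`|B| ≤ |A|/2`, the edge boundary of `B` inside `A` satisfies
`|∂_E B| / (n |B|) ≥ ℙ[A] / (16 n)` where `ℙ[A] = |A|/2^n`. -/
theorem conductance_lower_bound {n : ℕ} (A B : Finset (Fin n → Bool))
    (hA : A.Nonempty) (hmono : IsMonotoneSet A)
    (hBA : B ⊆ A) (hB : B.Nonempty) (hhalf : 2 * B.card ≤ A.card) :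
    ((((B ×ˢ (A \ B)).filter fun p => adjacent p.1 p.2).card : ℝ)) / (n * B.card)
      ≥ ((A.card : ℝ) / 2 ^ n) / (16 * n) := by
  classical
  have hn : 0 < n := by
    rcases Nat.eq_zero_or_pos n with h | h
    · subst h
      have h1 : A.card ≤ 1 := by
        have h := Finset.card_le_univ A
        rw [card_cube] at h
        simpa using h
      have h2 : 0 < B.card := Finset.card_pos.mpr hB
      omega
    · exact h
  have hcore := core n A B hmono hBA
  have hsd := Finset.card_sdiff_add_card_eq_card hBA
  have key : A.card * B.card ≤ 2 ^ n * (cutP A B).card := by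
    have h4 : A.card ≤ 2 * (A \ B).card := by omega
    have h3 : A.card * B.card ≤ 2 * B.card * (A \ B).card := by
      calc A.card * B.card ≤ (2 * (A \ B).card) * B.card := Nat.mul_le_mul h4 (le_refl _)
        _ = 2 * B.card * (A \ B).card := by ring
    exact le_trans h3 hcore
  have hc : cutP A B = (B ×ˢ (A \ B)).filter fun p => adjacent p.1 p.2 := rfl
  rw [hc] at key
  have keyR : (A.card : ℝ) * B.card
      ≤ 2 ^ n * (((B ×ˢ (A \ B)).filter fun p => adjacent p.1 p.2).card : ℝ) := by
    exact_mod_cast key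
  have hnR : (0:ℝ) < n := by exact_mod_cast hn
  have hBR : (0:ℝ) < B.card := by exact_mod_cast Finset.card_pos.mpr hB
  have hcutR : (0:ℝ) ≤ (((B ×ˢ (A \ B)).filter fun p => adjacent p.1 p.2).card : ℝ) := by
    positivity
  have hpow : (0:ℝ) < 2 ^ n := by positivity
  rw [ge_iff_le, div_div, div_le_div_iff₀
    (mul_pos hpow (by linarith : (0:ℝ) < 16 * (n:ℝ))) (mul_pos hnR hBR)]
  nlinarith [keyR, hnR, hcutR, hpow,
    mul_le_mul_of_nonneg_left keyR (le_of_lt hnR),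
    mul_nonneg (mul_nonneg (le_of_lt hnR) (le_of_lt hpow)) hcutR]
end

section
/- For any set $S \subseteq \{0,1\}^n$, define $\delta(S) = (n 2^n)^{-1} \cdot |\{(x,y) \in \{0,1\}^n \times \{0,1\}^n : x \le y,\ x \text{ and } y \text{ differ in exactly one coordinate},\ x \in S,\ y \notin S\}|$ and $\epsilon(S) = \min\{\mathbb{P}(S \oplus A) : A \subseteq \{0,1\}^n \text{ monotone}\}$, where $\oplus$ denotes symmetric difference. Then $\delta(S) \ge \epsilon(S)/n$. -/
open Finset

namespace GG

variable {n : ℕ}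

lemma upd_upd (x : Fin n → Bool) (i : Fin n) (a b : Bool) :
    Function.update (Function.update x i a) i b = Function.update x i b := by
  simp [Function.update_idem]

lemma card_eq_halfsum (i : Fin n) (F : Finset (Fin n → Bool)) :
    F.card = ∑ x ∈ univ.filter (fun x : Fin n → Bool => x i = false),
      ((if x ∈ F then 1 else 0) + (if Function.update x i true ∈ F then 1 else 0)) := by
  rw [Finset.sum_add_distrib]
  have h1 : ∑ x ∈ univ.filter (fun x : Fin n → Bool => x i = false),
      (if x ∈ F then (1:ℕ) else 0) = (F.filter fun x => x i = false).card := by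
    rw [← Finset.card_filter]
    congr 1
    ext x
    simp [and_comm]
  have h2 : ∑ x ∈ univ.filter (fun x : Fin n → Bool => x i = false),
      (if Function.update x i true ∈ F then (1:ℕ) else 0)
      = (F.filter fun x => x i = true).card := by
    rw [← Finset.card_filter]
    apply Finset.card_bij (fun x _ => Function.update x i true)
    · intro x hx
      simp only [Finset.mem_filter] at hx ⊢
      exact ⟨hx.2, Function.update_self i true x⟩
    · intro x hx y hy hxy
      simp only [Finset.mem_filter, Finset.mem_univ, true_and] at hx hy
      funext j
      by_cases hj : j = i
      · subst hj; rw [hx.1, hy.1]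
      · have := congrFun hxy j
        rwa [Function.update_of_ne hj, Function.update_of_ne hj] at this
    · intro y hy
      simp only [Finset.mem_filter] at hy
      refine ⟨Function.update y i false, ?_, ?_⟩
      · simp only [Finset.mem_filter, Finset.mem_univ, true_and]
        constructor
        · exact Function.update_self i false y
        · rw [upd_upd, ← hy.2, Function.update_eq_self]
          exact hy.1
      · rw [upd_upd, ← hy.2, Function.update_eq_self]
  rw [h1, h2]
  rw [← Finset.card_filter_add_card_filter_not (p := fun x => x i = false) (s := F)]
  congr 1
  apply congrArg
  apply Finset.filter_congr
  intro x _
  simp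

end GG

namespace GG2
open GG

variable {n : ℕ}

def vset (i : Fin n) (S : Finset (Fin n → Bool)) : Finset (Fin n → Bool) :=
  S.filter fun x => x i = false ∧ Function.update x i true ∉ S

def V (T : Finset (Fin n)) (S : Finset (Fin n → Bool)) : ℕ :=
  ∑ i ∈ T, (vset i S).card

def MonoT (T : Finset (Fin n)) (A : Finset (Fin n → Bool)) : Prop :=
  ∀ x ∈ A, ∀ i ∈ T, Function.update x i true ∈ A

lemma key (T : Finset (Fin n)) : ∀ S : Finset (Fin n → Bool),
    ∃ A, MonoT T A ∧ (symmDiff S A).card ≤ V T S := by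
  induction T using Finset.induction_on with
  | empty =>
      intro S
      refine ⟨S, ?_, ?_⟩
      · intro x hx j hj; simp at hj
      · simp [V, symmDiff_self]
  | @insert i T' hi ih =>
      intro S
      set S0 := S.filter (fun x => x i = false) with hS0
      set S1 := S.filter (fun x => x i = true) with hS1
      obtain ⟨B0r, hB0m, hB0c⟩ := ih S0
      obtain ⟨B1r, hB1m, hB1c⟩ := ih S1
      set B0 := B0r.filter (fun x => x i = false) with hB0
      set B1 := B1r.filter (fun x => x i = true) with hB1
      have hB0mono : MonoT T' B0 := by
        intro x hx j hj
        have hji : j ≠ i := fun h => hi (h ▸ hj)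
        rw [hB0, Finset.mem_filter] at hx ⊢
        exact ⟨hB0m x hx.1 j hj, by rw [Function.update_of_ne hji.symm]; exact hx.2⟩
      have hB1mono : MonoT T' B1 := by
        intro x hx j hj
        have hji : j ≠ i := fun h => hi (h ▸ hj)
        rw [hB1, Finset.mem_filter] at hx ⊢
        exact ⟨hB1m x hx.1 j hj, by rw [Function.update_of_ne hji.symm]; exact hx.2⟩
      have hB0c' : (symmDiff S0 B0).card ≤ V T' S0 := by
        refine le_trans (Finset.card_le_card ?_) hB0c
        intro x hx
        rw [Finset.mem_symmDiff] at hx ⊢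
        rcases hx with ⟨hxS, hxB⟩ | ⟨hxB, hxS⟩
        · left
          refine ⟨hxS, fun hB => hxB ?_⟩
          rw [hB0, Finset.mem_filter]
          exact ⟨hB, (Finset.mem_filter.mp hxS).2⟩
        · right
          exact ⟨(Finset.mem_filter.mp hxB).1, hxS⟩
      have hB1c' : (symmDiff S1 B1).card ≤ V T' S1 := by
        refine le_trans (Finset.card_le_card ?_) hB1c
        intro x hx
        rw [Finset.mem_symmDiff] at hx ⊢
        rcases hx with ⟨hxS, hxB⟩ | ⟨hxB, hxS⟩
        · left
          refine ⟨hxS, fun hB => hxB ?_⟩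
          rw [hB1, Finset.mem_filter]
          exact ⟨hB, (Finset.mem_filter.mp hxS).2⟩
        · right
          exact ⟨(Finset.mem_filter.mp hxB).1, hxS⟩
      have hVsplit : V T' S0 + V T' S1 ≤ V T' S := by
        rw [V, V, V, ← Finset.sum_add_distrib]
        apply Finset.sum_le_sum
        intro j hj
        have hji : j ≠ i := fun h => hi (h ▸ hj)
        have hsub0 : vset j S0 ⊆ vset j S := by
          intro x hx
          rw [vset, Finset.mem_filter] at hx ⊢
          obtain ⟨hxS0, hxj, hxu⟩ := hx
          have hxi : x i = false := (Finset.mem_filter.mp hxS0).2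
          refine ⟨(Finset.mem_filter.mp hxS0).1, hxj, fun h => hxu ?_⟩
          rw [hS0, Finset.mem_filter]
          refine ⟨h, ?_⟩
          rw [Function.update_of_ne hji.symm]
          exact hxi
        have hsub1 : vset j S1 ⊆ vset j S := by
          intro x hx
          rw [vset, Finset.mem_filter] at hx ⊢
          obtain ⟨hxS1, hxj, hxu⟩ := hx
          have hxi : x i = true := (Finset.mem_filter.mp hxS1).2
          refine ⟨(Finset.mem_filter.mp hxS1).1, hxj, fun h => hxu ?_⟩
          rw [hS1, Finset.mem_filter]
          refine ⟨h, ?_⟩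
          rw [Function.update_of_ne hji.symm]
          exact hxi
        have hdisj : Disjoint (vset j S0) (vset j S1) := by
          rw [Finset.disjoint_left]
          intro x hx0 hx1
          have h0 : x i = false := (Finset.mem_filter.mp (Finset.mem_filter.mp hx0).1).2
          have h1 : x i = true := (Finset.mem_filter.mp (Finset.mem_filter.mp hx1).1).2
          rw [h0] at h1
          exact absurd h1 (by simp)
        rw [← Finset.card_union_of_disjoint hdisj]
        exact Finset.card_le_card (Finset.union_subset hsub0 hsub1)
      -- the two candidate sets
      set D := B1.image (fun x => Function.update x i false) with hD
      set U := B0.image (fun x => Function.update x i true) with hU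
      set A1 := (B0 ∩ D) ∪ B1 with hA1
      set A2 := (B0 ∪ B1) ∪ U with hA2
      have hmemB0 : ∀ x ∈ B0, x i = false := fun x hx => (Finset.mem_filter.mp hx).2
      have hmemB1 : ∀ x ∈ B1, x i = true := fun x hx => (Finset.mem_filter.mp hx).2
      have hmemD : ∀ x ∈ D, x i = false := by
        intro x hx
        rw [hD, Finset.mem_image] at hx
        obtain ⟨y, _, rfl⟩ := hx
        exact Function.update_self i false y
      have hmemU : ∀ x ∈ U, x i = true := by
        intro x hx
        rw [hU, Finset.mem_image] at hx
        obtain ⟨y, _, rfl⟩ := hx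
        exact Function.update_self i true y
      have hmD : ∀ x : Fin n → Bool, x i = false →
          (x ∈ D ↔ Function.update x i true ∈ B1) := by
        intro x hx
        rw [hD, Finset.mem_image]
        constructor
        · rintro ⟨y, hy, rfl⟩
          have : Function.update (Function.update y i false) i true = y := by
            rw [upd_upd, ← hmemB1 y hy, Function.update_eq_self]
          rw [this]; exact hy
        · intro h
          exact ⟨_, h, by rw [upd_upd, ← hx, Function.update_eq_self]⟩
      have hmU : ∀ x : Fin n → Bool, x i = false →
          (Function.update x i true ∈ U ↔ x ∈ B0) := by
        intro x hx
        rw [hU, Finset.mem_image]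
        constructor
        · rintro ⟨y, hy, hyx⟩
          have : y = x := by
            funext j
            by_cases hj : j = i
            · subst hj; rw [hmemB0 y hy, hx]
            · have := congrFun hyx j
              rwa [Function.update_of_ne hj, Function.update_of_ne hj] at this
          rwa [← this]
        · intro h; exact ⟨x, h, rfl⟩
      have hmonoA1 : MonoT (insert i T') A1 := by
        intro x hx j hj
        rw [Finset.mem_insert] at hj
        rw [hA1, Finset.mem_union] at hx
        rcases hj with rfl | hj
        · rcases hx with hx | hx
          · have hxD : x ∈ D := (Finset.mem_inter.mp hx).2
            have hxi : x j = false := hmemD x hxD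
            have h := (hmD x hxi).mp hxD
            rw [hA1, Finset.mem_union]; right; exact h
          · have hxi : x j = true := hmemB1 x hx
            have hupd : Function.update x j true = x := by
              rw [← hxi]; exact Function.update_eq_self j x
            rw [hupd, hA1, Finset.mem_union]; right; exact hx
        · have hji : j ≠ i := fun h => hi (h ▸ hj)
          rcases hx with hx | hx
          · obtain ⟨hxB0, hxD⟩ := Finset.mem_inter.mp hx
            have hxi : x i = false := hmemB0 x hxB0
            have h1 : Function.update x j true ∈ B0 := hB0mono x hxB0 j hj
            have hui : (Function.update x j true) i = false := by
              rw [Function.update_of_ne hji.symm]; exact hxi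
            have h2 : Function.update x j true ∈ D := by
              rw [hmD _ hui, Function.update_comm hji]
              exact hB1mono _ ((hmD x hxi).mp hxD) j hj
            rw [hA1, Finset.mem_union]; left; exact Finset.mem_inter.mpr ⟨h1, h2⟩
          · rw [hA1, Finset.mem_union]; right; exact hB1mono x hx j hj
      have hmonoA2 : MonoT (insert i T') A2 := by
        intro x hx j hj
        rw [Finset.mem_insert] at hj
        rw [hA2, Finset.mem_union, Finset.mem_union] at hx
        rcases hj with rfl | hj
        · rcases hx with (hx | hx) | hx
          · rw [hA2, Finset.mem_union]; right
            exact (hmU x (hmemB0 x hx)).mpr hx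
          · have hxi : x j = true := hmemB1 x hx
            have hupd : Function.update x j true = x := by
              rw [← hxi]; exact Function.update_eq_self j x
            rw [hupd, hA2, Finset.mem_union, Finset.mem_union]
            left; right; exact hx
          · have hxi : x j = true := hmemU x hx
            have hupd : Function.update x j true = x := by
              rw [← hxi]; exact Function.update_eq_self j x
            rw [hupd, hA2, Finset.mem_union]
            right; exact hx
        · have hji : j ≠ i := fun h => hi (h ▸ hj)
          rcases hx with (hx | hx) | hx
          · rw [hA2, Finset.mem_union, Finset.mem_union]
            left; left; exact hB0mono x hx j hj
          · rw [hA2, Finset.mem_union, Finset.mem_union]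
            left; right; exact hB1mono x hx j hj
          · rw [hU, Finset.mem_image] at hx
            obtain ⟨y, hy, rfl⟩ := hx
            rw [hA2, Finset.mem_union]; right
            rw [hU, Finset.mem_image]
            refine ⟨Function.update y j true, hB0mono y hy j hj, ?_⟩
            rw [Function.update_comm hji.symm]
      have hcost : (symmDiff S A1).card + (symmDiff S A2).card ≤
          2 * ((symmDiff S0 B0).card + ((symmDiff S1 B1).card + (vset i S).card)) := by
        rw [card_eq_halfsum i (symmDiff S A1), card_eq_halfsum i (symmDiff S A2),
          card_eq_halfsum i (symmDiff S0 B0), card_eq_halfsum i (symmDiff S1 B1),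
          card_eq_halfsum i (vset i S), ← Finset.sum_add_distrib,
          ← Finset.sum_add_distrib, ← Finset.sum_add_distrib, Finset.mul_sum]
        apply Finset.sum_le_sum
        intro x hxm
        have hx : x i = false := by simpa using hxm
        have hxB1 : x ∉ B1 := fun h => by
          rw [hmemB1 x h] at hx; exact absurd hx (by simp)
        have huB0 : Function.update x i true ∉ B0 := fun h => by
          have h2 := hmemB0 _ h
          rw [Function.update_self] at h2
          exact absurd h2 (by simp)
        have huD : Function.update x i true ∉ D := fun h => by
          have h2 := hmemD _ h
          rw [Function.update_self] at h2
          exact absurd h2 (by simp)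
        have hxU : x ∉ U := fun h => by
          rw [hmemU x h] at hx; exact absurd hx (by simp)
        have hxD := hmD x hx
        have huU := hmU x hx
        have hxS0 : x ∈ S0 ↔ x ∈ S := by
          rw [hS0, Finset.mem_filter]; simp [hx]
        have hxS1 : x ∉ S1 := by
          rw [hS1, Finset.mem_filter]; simp [hx]
        have huS1 : Function.update x i true ∈ S1 ↔ Function.update x i true ∈ S := by
          rw [hS1, Finset.mem_filter]; simp [Function.update_self]
        have huS0 : Function.update x i true ∉ S0 := by
          rw [hS0, Finset.mem_filter]; simp [Function.update_self]
        have hxv : x ∈ vset i S ↔ (x ∈ S ∧ Function.update x i true ∉ S) := by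
          rw [vset, Finset.mem_filter]; simp [hx, and_assoc]
        have huv : Function.update x i true ∉ vset i S := by
          rw [vset, Finset.mem_filter]
          simp [Function.update_self]
        by_cases hs : x ∈ S <;> by_cases hs' : Function.update x i true ∈ S <;>
          by_cases hb : x ∈ B0 <;> by_cases hc : Function.update x i true ∈ B1 <;>
          simp [Finset.mem_symmDiff, hA1, hA2, Finset.mem_union, Finset.mem_inter,
            hxB1, huB0, huD, hxU, hxD, huU, hxS0, hxS1, huS1, huS0, hxv, huv,
            hs, hs', hb, hc]
      have hVins : V (insert i T') S = (vset i S).card + V T' S := by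
        rw [V, Finset.sum_insert hi]; rfl
      have hM : (symmDiff S0 B0).card + ((symmDiff S1 B1).card + (vset i S).card)
          ≤ V (insert i T') S := by
        rw [hVins]; omega
      rcases le_total (symmDiff S A1).card (symmDiff S A2).card with hle | hle
      · exact ⟨A1, hmonoA1, by omega⟩
      · exact ⟨A2, hmonoA2, by omega⟩


lemma mono_of_monoT (A : Finset (Fin n → Bool)) (h : MonoT Finset.univ A) :
    ∀ x ∈ A, ∀ y : Fin n → Bool, (∀ i, x i ≤ y i) → y ∈ A := by
  suffices H : ∀ k : ℕ, ∀ x ∈ A, ∀ y : Fin n → Bool, (∀ i, x i ≤ y i) →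
      (univ.filter fun i => x i ≠ y i).card ≤ k → y ∈ A by
    intro x hx y hy
    exact H _ x hx y hy le_rfl
  intro k
  induction k with
  | zero =>
      intro x hx y hle hcard
      have hxy : x = y := by
        funext j
        by_contra hne
        have : j ∈ univ.filter fun i => x i ≠ y i := by
          simp [hne]
        rw [Nat.le_zero, Finset.card_eq_zero] at hcard
        rw [hcard] at this
        exact absurd this (Finset.notMem_empty j)
      rwa [← hxy]
  | succ k ihk =>
      intro x hx y hle hcard
      by_cases hxy : x = y
      · rwa [← hxy]
      · have : ∃ j, x j ≠ y j := by
          by_contra hc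
          push_neg at hc
          exact hxy (funext hc)
        obtain ⟨j, hj⟩ := this
        have hxj : x j = false ∧ y j = true := by
          have := hle j
          revert this hj
          cases x j <;> cases y j <;> simp
        have hx' : Function.update x j true ∈ A := h x hx j (Finset.mem_univ j)
        apply ihk _ hx' y
        · intro i
          by_cases hij : i = j
          · subst hij; rw [Function.update_self, hxj.2]
          · rw [Function.update_of_ne hij]; exact hle i
        · have hfe : (univ.filter fun i => Function.update x j true i ≠ y i)
              = (univ.filter fun i => x i ≠ y i).erase j := by
            ext i
            simp only [Finset.mem_filter, Finset.mem_erase, Finset.mem_univ, true_and]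
            by_cases hij : i = j
            · subst hij
              simp [Function.update_self, hxj.2]
            · rw [Function.update_of_ne hij]
              simp [hij]
          have hjm : j ∈ univ.filter fun i => x i ≠ y i := by simp [hj]
          rw [hfe, Finset.card_erase_of_mem hjm]
          omega

lemma pairs_ge (S : Finset (Fin n → Bool)) :
    V Finset.univ S ≤ ((Finset.univ ×ˢ Finset.univ).filter
          fun p : (Fin n → Bool) × (Fin n → Bool) =>
            (∀ i, p.1 i ≤ p.2 i) ∧ adjacent p.1 p.2 ∧ p.1 ∈ S ∧ p.2 ∉ S).card := by
  have hinj : ∀ i : Fin n, Function.Injective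
      (fun x : Fin n → Bool => (x, Function.update x i true)) := by
    intro i x y hxy
    exact congrArg Prod.fst hxy
  have hdisj : ∀ a ∈ (Finset.univ : Finset (Fin n)), ∀ b ∈ (Finset.univ : Finset (Fin n)),
      a ≠ b → Disjoint ((vset a S).image (fun x => (x, Function.update x a true)))
        ((vset b S).image (fun x => (x, Function.update x b true))) := by
    intro a _ b _ hab
    rw [Finset.disjoint_left]
    intro p hpa hpb
    rw [Finset.mem_image] at hpa hpb
    obtain ⟨x, hx, rfl⟩ := hpa
    obtain ⟨y, hy, hpe⟩ := hpb
    have hxy : y = x := congrArg Prod.fst hpe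
    subst hxy
    have h2 : Function.update y b true = Function.update y a true :=
      congrArg Prod.snd hpe
    have hyb : y b = false := (Finset.mem_filter.mp hy).2.1
    have h3 := congrFun h2 b
    rw [Function.update_self, Function.update_of_ne (Ne.symm hab), hyb] at h3
    exact absurd h3 (by simp)
  calc V Finset.univ S
      = ∑ i : Fin n, ((vset i S).image
          (fun x => (x, Function.update x i true))).card := by
        apply Finset.sum_congr rfl
        intro i _
        rw [Finset.card_image_of_injective _ (hinj i)]
    _ = ((Finset.univ : Finset (Fin n)).biUnion
          (fun i => (vset i S).image (fun x => (x, Function.update x i true)))).card :=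
        (Finset.card_biUnion hdisj).symm
    _ ≤ _ := by
        apply Finset.card_le_card
        intro p hp
        rw [Finset.mem_biUnion] at hp
        obtain ⟨i, _, hp⟩ := hp
        rw [Finset.mem_image] at hp
        obtain ⟨x, hx, rfl⟩ := hp
        rw [vset, Finset.mem_filter] at hx
        obtain ⟨hxS, hxi, hxu⟩ := hx
        rw [Finset.mem_filter]
        dsimp only
        refine ⟨Finset.mem_product.mpr ⟨Finset.mem_univ _, Finset.mem_univ _⟩, ?_, ?_, hxS, hxu⟩
        · intro j
          by_cases hj : j = i
          · subst hj
            simp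
          · simp [Function.update_of_ne hj]
        · show (univ.filter fun j => x j ≠ Function.update x i true j).card = 1
          have : (univ.filter fun j => x j ≠ Function.update x i true j) = {i} := by
            ext j
            simp only [Finset.mem_filter, Finset.mem_univ, true_and, Finset.mem_singleton]
            by_cases hj : j = i
            · subst hj
              simp [Function.update_self, hxi]
            · rw [Function.update_of_ne hj]
              simp [hj]
          rw [this, Finset.card_singleton]

end GG2

/-- The Goldreich–Goldwasser–Lehman–Ron–Samorodnitsky theorem:
for any `S ⊆ {0,1}^n`, letting
`δ(S) = (n 2^n)⁻¹ |{(x,y) : x ≤ y, x,y adjacent, x ∈ S, y ∉ S}|` and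
`ε(S) = min { ℙ(S ⊕ A) : A monotone }`, we have `δ(S) ≥ ε(S)/n`.
Since the minimum is attained, this is stated as: there is a monotone `A`
witnessing `δ(S) ≥ ℙ(S ⊕ A)/n`. -/
theorem monotonicity_testing {n : ℕ} (S : Finset (Fin n → Bool)) :
    ∃ A : Finset (Fin n → Bool), IsMonotoneSet A ∧
      (((Finset.univ ×ˢ Finset.univ).filter
          fun p : (Fin n → Bool) × (Fin n → Bool) =>
            (∀ i, p.1 i ≤ p.2 i) ∧ adjacent p.1 p.2 ∧ p.1 ∈ S ∧ p.2 ∉ S).card : ℝ)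
            / ((n : ℝ) * 2 ^ n)
        ≥ (((symmDiff S A).card : ℝ) / 2 ^ n) / n := by
  obtain ⟨A, hAm, hAc⟩ := GG2.key Finset.univ S
  refine ⟨A, GG2.mono_of_monoT A hAm, ?_⟩
  have hcard : (symmDiff S A).card ≤ ((Finset.univ ×ˢ Finset.univ).filter
      fun p : (Fin n → Bool) × (Fin n → Bool) =>
        (∀ i, p.1 i ≤ p.2 i) ∧ adjacent p.1 p.2 ∧ p.1 ∈ S ∧ p.2 ∉ S).card :=
    hAc.trans (GG2.pairs_ge S)
  rw [ge_iff_le, div_div, mul_comm ((2:ℝ)^n) (n:ℝ)]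
  have hcard' : ((symmDiff S A).card : ℝ) ≤ (((Finset.univ ×ˢ Finset.univ).filter
      fun p : (Fin n → Bool) × (Fin n → Bool) =>
        (∀ i, p.1 i ≤ p.2 i) ∧ adjacent p.1 p.2 ∧ p.1 ∈ S ∧ p.2 ∉ S).card : ℝ) := by
    exact_mod_cast hcard
  gcongr
end

section
/- Let $n \ge 2m \ge 2$ and let $A = \{x \in \{0,1\}^n : x_1 = \cdots = x_m = 1\} \cup \{x : x_{m+1} = \cdots = x_{2m} = 1\}$ and $B = \{x : x_1 = \cdots = x_m = 1\} \subseteq A$. Then the edge-boundary of $B$ inside $A$ satisfies $|\partial_E B| = m \cdot 2^{n-2m}$, and consequently $\Phi(B) = \frac{|\partial_E B|}{n |B|} = \frac{m}{n} \cdot 2^{-m} \le 2^{-m}$. -/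
lemma card_lt_aux (n k : ℕ) (hk : k ≤ n) :
    Fintype.card {i : Fin n // i.1 < k} = k := by
  rw [Fintype.card_congr (⟨fun i => ⟨i.1.1, i.2⟩, fun j => ⟨⟨j.1, lt_of_lt_of_le j.2 hk⟩, j.2⟩,
    fun i => by ext; rfl, fun j => by ext; rfl⟩ : {i : Fin n // i.1 < k} ≃ Fin k)]
  exact Fintype.card_fin k

lemma card_fixed_aux (n k : ℕ) (hk : k ≤ n) :
    (Finset.univ.filter fun x : Fin n → Bool => ∀ i : Fin n, i.1 < k → x i = true).card
      = 2 ^ (n - k) := by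
  rw [← Fintype.card_subtype]
  have e1 : {x : Fin n → Bool // ∀ i : Fin n, i.1 < k → x i = true}
      ≃ {x : Fin n → Bool // x ∘ Subtype.val = (fun _ : {i : Fin n // i.1 < k} => true)} :=
    Equiv.subtypeEquivRight (by
      intro x
      constructor
      · intro h; funext i; exact h i.1 i.2
      · intro h i hi; exact congrFun h ⟨i, hi⟩)
  rw [Fintype.card_congr (e1.trans (Equiv.subtypePreimage _ _))]
  rw [Fintype.card_fun, Fintype.card_bool, Fintype.card_subtype_compl, card_lt_aux n k hk,
    Fintype.card_fin]

lemma card_idx_aux (n k : ℕ) (hk : k ≤ n) :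
    (Finset.univ.filter fun j : Fin n => j.1 < k).card = k := by
  rw [← Fintype.card_subtype, card_lt_aux n k hk]

/-- For `n ≥ 2m ≥ 2`, `A = {x : x_1 = ⋯ = x_m = 1} ∪ {x : x_{m+1} = ⋯ = x_{2m} = 1}`
and `B = {x : x_1 = ⋯ = x_m = 1}`, the edge boundary of `B` inside `A` has size
`m · 2^(n-2m)`, and hence `Φ(B) = |∂_E B|/(n|B|) = (m/n)·2^{-m} ≤ 2^{-m}`. -/
theorem conductance_example {n m : ℕ} (hm : 1 ≤ m) (hnm : 2 * m ≤ n) :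
    let A : Finset (Fin n → Bool) := Finset.univ.filter fun x =>
      (∀ i : Fin n, i.1 < m → x i = true) ∨
      (∀ i : Fin n, m ≤ i.1 → i.1 < 2 * m → x i = true)
    let B : Finset (Fin n → Bool) := Finset.univ.filter fun x =>
      ∀ i : Fin n, i.1 < m → x i = true
    ((B ×ˢ (A \ B)).filter fun p => adjacent p.1 p.2).card = m * 2 ^ (n - 2 * m) ∧
    ((((B ×ˢ (A \ B)).filter fun p => adjacent p.1 p.2).card : ℝ)) / (n * B.card)
      = ((m : ℝ) / n) * (1 / 2) ^ m ∧
    ((m : ℝ) / n) * (1 / 2) ^ m ≤ (1 / 2 : ℝ) ^ m := by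
  intro A B
  have hmn : m ≤ n := le_trans (by omega) hnm
  have hBcard : B.card = 2 ^ (n - m) := card_fixed_aux n m hmn
  -- main counting
  have hcount : ((B ×ˢ (A \ B)).filter fun p => adjacent p.1 p.2).card
      = m * 2 ^ (n - 2 * m) := by
    have key : ((Finset.univ.filter fun j : Fin n => j.1 < m) ×ˢ
        (Finset.univ.filter fun x : Fin n → Bool => ∀ i : Fin n, i.1 < 2 * m → x i = true)).card
        = ((B ×ˢ (A \ B)).filter fun p => adjacent p.1 p.2).card := by
      apply Finset.card_bij (fun p _ => (p.2, Function.update p.2 p.1 false))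
      · rintro ⟨j, x⟩ hp
        simp only [Finset.mem_product, Finset.mem_filter, Finset.mem_univ, true_and] at hp
        obtain ⟨hj, hx⟩ := hp
        dsimp only
        have hdiff : (Finset.univ.filter fun i => x i ≠ Function.update x j false i) = {j} := by
          ext i
          simp only [Finset.mem_filter, Finset.mem_univ, true_and, Finset.mem_singleton]
          rcases eq_or_ne i j with rfl | hij
          · simp [Function.update_self, hx i (by omega)]
          · simp [Function.update_of_ne hij, hij]
        refine Finset.mem_filter.2 ⟨Finset.mem_product.2 ⟨?_, ?_⟩, ?_⟩
        · exact Finset.mem_filter.2 ⟨Finset.mem_univ _, fun i hi => hx i (by omega)⟩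
        · refine Finset.mem_sdiff.2 ⟨Finset.mem_filter.2 ⟨Finset.mem_univ _, Or.inr ?_⟩, ?_⟩
          · intro i hi1 hi2
            show Function.update x j false i = true
            rw [Function.update_of_ne (by intro h; subst h; omega)]
            exact hx i hi2
          · intro hmem
            have h3 : Function.update x j false j = true := (Finset.mem_filter.1 hmem).2 j hj
            rw [Function.update_self] at h3
            exact Bool.false_ne_true h3
        · show adjacent _ _
          unfold adjacent
          rw [hdiff, Finset.card_singleton]
      · rintro ⟨j, x⟩ hp ⟨j', x'⟩ hp' heq
        simp only [Prod.mk.injEq] at heq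
        obtain ⟨rfl, heq2⟩ := heq
        simp only [Finset.mem_product, Finset.mem_filter, Finset.mem_univ, true_and] at hp hp'
        rcases eq_or_ne j j' with rfl | hjj
        · rfl
        · exfalso
          have h1 := congrFun heq2 j
          rw [Function.update_self, Function.update_of_ne hjj] at h1
          have h2 := hp'.2 j (by have := hp.1; omega)
          rw [h2] at h1
          exact Bool.false_ne_true h1
      · rintro ⟨x, y⟩ hp
        simp only [Finset.mem_filter, Finset.mem_product, Finset.mem_sdiff] at hp
        obtain ⟨⟨hx, hyA, hyB⟩, hadj⟩ := hp
        have hxB := (Finset.mem_filter.1 hx).2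
        obtain ⟨j, hjset⟩ := Finset.card_eq_one.1 hadj
        have hne : ∀ i, i ≠ j → x i = y i := by
          intro i hi
          by_contra hc
          have : i ∈ ({j} : Finset (Fin n)) := by
            rw [← hjset]; exact Finset.mem_filter.2 ⟨Finset.mem_univ _, hc⟩
          simp at this; exact hi this
        have hjmem : x j ≠ y j := by
          have : j ∈ ({j} : Finset (Fin n)) := Finset.mem_singleton_self j
          rw [← hjset] at this
          exact (Finset.mem_filter.1 this).2
        have hyB' : ¬ ∀ i : Fin n, i.1 < m → y i = true := by
          intro h; exact hyB (Finset.mem_filter.2 ⟨Finset.mem_univ _, h⟩)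
        push_neg at hyB'
        obtain ⟨i0, hi0, hyi0⟩ := hyB'
        have hi0j : i0 = j := by
          by_contra hc
          exact hyi0 ((hne i0 hc).symm.trans (hxB i0 hi0))
        have hjm : j.1 < m := hi0j ▸ hi0
        have hyj' : y j ≠ true := hi0j ▸ hyi0
        have hyj : y j = false := by
          cases h : y j
          · rfl
          · exact absurd h hyj'
        have hyA2 : ∀ i : Fin n, m ≤ i.1 → i.1 < 2 * m → y i = true := by
          rcases (Finset.mem_filter.1 hyA).2 with h | h
          · exact absurd (Finset.mem_filter.2 ⟨Finset.mem_univ _, h⟩) hyB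
          · exact h
        refine ⟨⟨j, x⟩, ?_, ?_⟩
        · simp only [Finset.mem_product, Finset.mem_filter, Finset.mem_univ, true_and]
          refine ⟨hjm, fun i hi => ?_⟩
          rcases lt_or_ge i.1 m with h | h
          · exact hxB i h
          · rw [hne i (by intro hij; subst hij; omega)]
            exact hyA2 i h hi
        · simp only [Prod.mk.injEq, true_and]
          funext i
          rcases eq_or_ne i j with rfl | hij
          · rw [Function.update_self, hyj]
          · rw [Function.update_of_ne hij]
            exact hne i hij
    rw [← key, Finset.card_product, card_idx_aux n m hmn, card_fixed_aux n (2 * m) hnm]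
  refine ⟨hcount, ?_, ?_⟩
  · rw [hcount, hBcard]
    have hn0 : (n : ℝ) ≠ 0 := Nat.cast_ne_zero.2 (by omega)
    have hsplit : n - m = (n - 2 * m) + m := by omega
    push_cast [hsplit, pow_add]
    field_simp
    ring_nf
    rw [← mul_pow]; norm_num
  · have hn0 : (0 : ℝ) < n := by
      have : 0 < n := by omega
      exact_mod_cast this
    have h1 : (m : ℝ) / n ≤ 1 := by
      apply div_le_one_of_le₀
      · exact_mod_cast hmn.trans' (by omega)
      · exact hn0.le
    calc ((m : ℝ)/n) * (1/2)^m ≤ 1 * (1/2)^m := by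
          apply mul_le_mul_of_nonneg_right h1 (by positivity)
      _ = (1/2 : ℝ)^m := one_mul _
end

section
/- Let $n \ge 2m$ with $m \ge 5$, let $A = \{x \in \{0,1\}^n : x_1 = \cdots = x_m = 1\} \cup \{x : x_{m+1} = \cdots = x_{2m} = 1\}$, and let $P$ be the transition matrix on $A$ of the censored Glauber chain $M_A$. Let $x_0 \in A$ be the point with $x_i = 1$ for $1 \le i \le m$ and $x_i = 0$ for $m < i \le n$. Then for every integer $t < 2^{m-4}$, $\frac{1}{2} \sum_{y \in A} \left| P^t(x_0, y) - \frac{1}{|A|} \right| > \frac{1}{4}$; that is, the mixing time of $M_A$ is at least $2^{m-4}$. -/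
/-- The set `A = {x : x_1 = ⋯ = x_m = 1} ∪ {x : x_{m+1} = ⋯ = x_{2m} = 1}`
(coordinates indexed from 0, so the first block is `i < m` and the second
is `m ≤ i < 2m`). -/
def twoBlocks (n m : ℕ) : Finset (Fin n → Bool) :=
  Finset.univ.filter fun x =>
    (∀ i : Fin n, i.1 < m → x i = true) ∨
    (∀ i : Fin n, m ≤ i.1 → i.1 < 2 * m → x i = true)

/-- The transition matrix on `A` of the censored Glauber chain `M_A`:
`P(x,y) = 1/(2n)` for distinct adjacent `x, y ∈ A`,
`P(x,x) = 1 - |{y ∈ A : y ≠ x, y adjacent to x}|/(2n)`, and `0` otherwise. -/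
noncomputable def censoredPmat (n : ℕ) (A : Finset (Fin n → Bool)) :
    Matrix {x // x ∈ A} {x // x ∈ A} ℝ :=
  fun x y =>
    if (x : Fin n → Bool) = y then
      1 - ((A.filter fun z => z ≠ (x : Fin n → Bool) ∧ adjacent (x : Fin n → Bool) z).card : ℝ) / (2 * n)
    else if adjacent (x : Fin n → Bool) (y : Fin n → Bool) then 1 / (2 * n)
    else 0

namespace CCML
variable {n : ℕ}

def flip (j : Fin n) (x : Fin n → Bool) : Fin n → Bool := Function.update x j (!(x j))

lemma flip_apply_self (j : Fin n) (x : Fin n → Bool) : flip j x j = !(x j) := by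
  simp [flip]

lemma flip_apply_ne (j i : Fin n) (x : Fin n → Bool) (h : i ≠ j) : flip j x i = x i := by
  simp [flip, Function.update_of_ne h]

lemma flip_ne (j : Fin n) (x : Fin n → Bool) : flip j x ≠ x := by
  intro h
  have := congrFun h j
  rw [flip_apply_self] at this
  cases x j <;> simp_all

lemma adjacent_iff {x y : Fin n → Bool} :
    adjacent x y ↔ ∃ j, y = flip j x := by
  constructor
  · intro h
    obtain ⟨j, hj⟩ := Finset.card_eq_one.mp h
    refine ⟨j, funext fun i => ?_⟩
    by_cases hij : i = j
    · subst hij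
      have : i ∈ Finset.univ.filter fun i => x i ≠ y i := by rw [hj]; simp
      simp only [Finset.mem_filter, Finset.mem_univ, true_and] at this
      rw [flip_apply_self]
      revert this
      cases hx : x i <;> cases hy : y i <;> simp [hx, hy]
    · have : i ∉ Finset.univ.filter fun i => x i ≠ y i := by rw [hj]; simp [hij]
      simp only [Finset.mem_filter, Finset.mem_univ, true_and, not_not] at this
      rw [flip_apply_ne _ _ _ hij, this]
  · rintro ⟨j, rfl⟩
    have : (Finset.univ.filter fun i => x i ≠ flip j x i) = {j} := by
      ext i
      simp only [Finset.mem_filter, Finset.mem_univ, true_and, Finset.mem_singleton]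
      constructor
      · intro h
        by_contra hij
        exact h (flip_apply_ne _ _ _ hij).symm
      · rintro rfl
        rw [flip_apply_self]; cases x i <;> simp
    rw [adjacent, this, Finset.card_singleton]

lemma adjacent_flip (j : Fin n) (x : Fin n → Bool) : adjacent x (flip j x) :=
  adjacent_iff.mpr ⟨j, rfl⟩

lemma flip_injOn (x : Fin n → Bool) {s : Finset (Fin n)} :
    Set.InjOn (flip · x) s := by
  intro i _ j _ h
  by_contra hij
  have := congrFun h i
  simp only at this
  rw [flip_apply_self, flip_apply_ne _ _ _ hij] at this
  cases x i <;> simp_all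


/-- card of subcube -/
lemma card_cube (s : Finset (Fin n)) :
    (Finset.univ.filter fun x : Fin n → Bool => ∀ i ∈ s, x i = true).card
      = 2 ^ (n - s.card) := by
  rw [← Fintype.card_subtype]
  have e : {x : Fin n → Bool // ∀ i ∈ s, x i = true} ≃ (↥(sᶜ) → Bool) :=
    { toFun := fun x i => x.1 i.1
      invFun := fun g =>
        ⟨fun i => if h : i ∈ s then true else g ⟨i, Finset.mem_compl.mpr h⟩,
         fun i hi => by simp [hi]⟩
      left_inv := by
        rintro ⟨x, hx⟩
        ext i
        by_cases h : i ∈ s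
        · simp [h, hx i h]
        · simp [h]
      right_inv := by
        intro g
        funext i
        have : (i : Fin n) ∉ s := Finset.mem_compl.mp i.2
        simp [this] }
  rw [Fintype.card_congr e]
  simp [Finset.card_compl]

lemma card_filter_lt (k : ℕ) (hk : k ≤ n) :
    (Finset.univ.filter fun i : Fin n => i.1 < k).card = k := by
  have : (Finset.univ.filter fun i : Fin n => i.1 < k)
      = Finset.attachFin (Finset.range k) (fun m hm => lt_of_lt_of_le (Finset.mem_range.mp hm) hk) := by
    ext i
    simp [Finset.mem_attachFin]
  rw [this, Finset.card_attachFin, Finset.card_range]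

lemma card_filter_ge (k : ℕ) (hk : k ≤ n) :
    (Finset.univ.filter fun i : Fin n => k ≤ i.1).card = n - k := by
  have h2 : (Finset.univ.filter fun i : Fin n => k ≤ i.1)
      = (Finset.univ.filter fun i : Fin n => i.1 < k)ᶜ := by
    ext i; simp [not_lt]
  rw [h2, Finset.card_compl, card_filter_lt k hk, Fintype.card_fin]

section Main
variable (n m : ℕ)

def inS (x : Fin n → Bool) : Prop := ∀ i : Fin n, i.1 < m → x i = true

def inB2 (x : Fin n → Bool) : Prop := ∀ i : Fin n, m ≤ i.1 → i.1 < 2 * m → x i = true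

instance : DecidablePred (inS n m) := fun _ => by unfold inS; infer_instance
instance : DecidablePred (inB2 n m) := fun _ => by unfold inB2; infer_instance

lemma mem_twoBlocks {x : Fin n → Bool} :
    x ∈ twoBlocks n m ↔ inS n m x ∨ inB2 n m x := by
  simp [twoBlocks, inS, inB2]

lemma inS_mem {x : Fin n → Bool} (h : inS n m x) : x ∈ twoBlocks n m :=
  (mem_twoBlocks n m).mpr (Or.inl h)

def degA (x : Fin n → Bool) : ℕ :=
  ((twoBlocks n m).filter fun z => z ≠ x ∧ adjacent x z).card

noncomputable def Pe (x y : Fin n → Bool) : ℝ :=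
  if x ∈ twoBlocks n m ∧ y ∈ twoBlocks n m then
    (if x = y then 1 - (degA n m x : ℝ) / (2 * n)
     else if adjacent x y then 1 / (2 * n) else 0)
  else 0

lemma Pe_eq_cens (x y : {z // z ∈ twoBlocks n m}) :
    censoredPmat n (twoBlocks n m) x y = Pe n m ↑x ↑y := by
  rw [Pe, if_pos ⟨x.2, y.2⟩, censoredPmat, degA]

lemma degA_le (x : Fin n → Bool) : degA n m x ≤ n := by
  have hsub : ((twoBlocks n m).filter fun z => z ≠ x ∧ adjacent x z)
      ⊆ (Finset.univ : Finset (Fin n)).image (fun j => flip j x) := by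
    intro z hz
    obtain ⟨j, rfl⟩ := adjacent_iff.mp (Finset.mem_filter.mp hz).2.2
    exact Finset.mem_image.mpr ⟨j, Finset.mem_univ _, rfl⟩
  calc degA n m x ≤ ((Finset.univ : Finset (Fin n)).image (fun j => flip j x)).card := Finset.card_le_card hsub
    _ ≤ (Finset.univ : Finset (Fin n)).card := Finset.card_image_le
    _ = n := by simp

lemma degA_ge (hmn : m ≤ n) {x : Fin n → Bool} (hx : inS n m x) :
    n - m ≤ degA n m x := by
  rw [← card_filter_ge m hmn]
  apply Finset.card_le_card_of_injOn (fun j => flip j x)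
  · intro j hj
    simp only [Finset.mem_coe, Finset.mem_filter, Finset.mem_univ, true_and] at hj
    refine Finset.mem_filter.mpr ⟨inS_mem n m fun i hi => ?_, flip_ne j x, adjacent_flip j x⟩
    show flip j x i = true
    rw [flip_apply_ne j i x (by intro h; subst h; omega)]
    exact hx i hi
  · exact flip_injOn x

lemma Pe_nonneg (hn : 0 < n) (x y : Fin n → Bool) : 0 ≤ Pe n m x y := by
  unfold Pe
  split_ifs with h1 h2 h3
  · have hd : (degA n m x : ℝ) ≤ n := by exact_mod_cast degA_le n m x
    have h2n : (0:ℝ) < 2 * n := by positivity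
    have : (degA n m x : ℝ) / (2 * n) ≤ 1 := by
      rw [div_le_one h2n]
      nlinarith
    linarith
  · positivity
  · exact le_refl 0
  · exact le_refl 0

lemma Pe_diag_le (hmn : m ≤ n) {x : Fin n → Bool} (hx : inS n m x) :
    Pe n m x x ≤ 1 - ((n:ℝ) - m) / (2 * n) := by
  have hxA := inS_mem n m hx
  rw [Pe, if_pos ⟨hxA, hxA⟩, if_pos rfl]
  have h1 : ((n:ℝ) - m) ≤ (degA n m x : ℝ) := by
    have := degA_ge n m hmn hx
    have : ((n - m : ℕ) : ℝ) ≤ (degA n m x : ℝ) := by exact_mod_cast this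
    rw [Nat.cast_sub hmn] at this
    exact this
  have h2 : ((n:ℝ) - m) / (2 * n) ≤ (degA n m x : ℝ) / (2 * n) := by gcongr
  linarith

lemma Pe_rowsum (hn : 0 < n) {x : Fin n → Bool} (hx : x ∈ twoBlocks n m) :
    ∑ y : Fin n → Bool, Pe n m x y = 1 := by
  rw [← Finset.sum_subset (Finset.subset_univ (twoBlocks n m))
    (fun y _ hy => by simp [Pe, hy])]
  rw [← Finset.add_sum_erase _ _ hx]
  have hstep : ∀ y ∈ (twoBlocks n m).erase x,
      Pe n m x y = if adjacent x y then 1 / (2 * (n:ℝ)) else 0 := by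
    intro y hy
    obtain ⟨hne, hyA⟩ := Finset.mem_erase.mp hy
    rw [Pe, if_pos ⟨hx, hyA⟩, if_neg (Ne.symm hne)]
  rw [Finset.sum_congr rfl hstep, ← Finset.sum_filter, Finset.sum_const, nsmul_eq_mul]
  have hcard : ((twoBlocks n m).erase x).filter (fun y => adjacent x y)
      = (twoBlocks n m).filter (fun z => z ≠ x ∧ adjacent x z) := by
    ext z
    simp only [Finset.mem_filter, Finset.mem_erase]
    tauto
  rw [hcard]
  rw [Pe, if_pos ⟨hx, hx⟩, if_pos rfl, degA]
  ring

/-- first-block-ones states -/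
def Fs : Finset (Fin n → Bool) := Finset.univ.filter (inS n m)

/-- indicator of "first 2m coordinates all one" -/
noncomputable def g0 (x : Fin n → Bool) : ℝ :=
  if ∀ i : Fin n, i.1 < 2 * m → x i = true then 1 else 0

/-- the start state -/
def x0w : Fin n → Bool := fun i => decide (i.1 < m)

noncomputable def T0 (f : (Fin n → Bool) → ℝ) : (Fin n → Bool) → ℝ :=
  fun x => (1 / (n:ℝ)) * ∑ j : Fin n,
    (if j.1 < m then f x
     else (f (Function.update x j false) + f (Function.update x j true)) / 2)

lemma update_flip {x : Fin n → Bool} {j : Fin n} {b : Bool} (h : x j ≠ b) :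
    Function.update x j b = flip j x := by
  funext i
  by_cases hij : i = j
  · subst hij
    rw [Function.update_self, flip_apply_self]
    cases hx : x i <;> cases b <;> simp_all
  · rw [Function.update_of_ne hij, flip_apply_ne _ _ _ hij]

lemma update_self' {x : Fin n → Bool} {j : Fin n} {b : Bool} (h : x j = b) :
    Function.update x j b = x := by
  funext i
  by_cases hij : i = j
  · subst hij; rw [Function.update_self, h]
  · rw [Function.update_of_ne hij]

lemma flip_mem_Fs {x : Fin n → Bool} (hx : x ∈ Fs n m) {j : Fin n} (hj : m ≤ j.1) :
    flip j x ∈ Fs n m := by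
  simp only [Fs, Finset.mem_filter, Finset.mem_univ, true_and] at hx ⊢
  intro i hi
  rw [flip_apply_ne j i x (by intro h; subst h; omega)]
  exact hx i hi

lemma flip_flip (j : Fin n) (x : Fin n → Bool) : flip j (flip j x) = x := by
  funext i
  by_cases hij : i = j
  · subst hij
    rw [flip_apply_self, flip_apply_self, Bool.not_not]
  · rw [flip_apply_ne _ _ _ hij, flip_apply_ne _ _ _ hij]

lemma sum_update (f : (Fin n → Bool) → ℝ) {j : Fin n} (hj : m ≤ j.1) (b : Bool) :
    ∑ x ∈ Fs n m, f (Function.update x j b)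
      = 2 * ∑ x ∈ (Fs n m).filter (fun x => x j = b), f x := by
  rw [← Finset.sum_filter_add_sum_filter_not (Fs n m) (fun x => x j = b)]
  have h0 : ∑ x ∈ (Fs n m).filter (fun x => x j = b), f (Function.update x j b)
      = ∑ x ∈ (Fs n m).filter (fun x => x j = b), f x := by
    refine Finset.sum_congr rfl fun x hx => ?_
    rw [update_self' n (Finset.mem_filter.mp hx).2]
  have h1 : ∑ x ∈ (Fs n m).filter (fun x => ¬ x j = b), f (Function.update x j b)
      = ∑ x ∈ (Fs n m).filter (fun x => x j = b), f x := by
    refine Finset.sum_nbij' (fun x => flip j x) (fun x => flip j x) ?_ ?_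
      (fun x _ => flip_flip n j x) (fun x _ => flip_flip n j x) ?_
    · intro x hx
      obtain ⟨hxF, hxb⟩ := Finset.mem_filter.mp hx
      refine Finset.mem_filter.mpr ⟨flip_mem_Fs n m hxF hj, ?_⟩
      show flip j x j = b
      rw [flip_apply_self]
      cases hxj : x j <;> cases b <;> simp_all
    · intro x hx
      obtain ⟨hxF, hxb⟩ := Finset.mem_filter.mp hx
      refine Finset.mem_filter.mpr ⟨flip_mem_Fs n m hxF hj, ?_⟩
      show ¬ flip j x j = b
      rw [flip_apply_self, hxb]
      cases b <;> simp
    · intro x hx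
      show f (Function.update x j b) = f (flip j x)
      rw [update_flip n (Finset.mem_filter.mp hx).2]
  rw [h0, h1]
  ring

lemma T0_avg (hn : 0 < n) (f : (Fin n → Bool) → ℝ) :
    ∑ x ∈ Fs n m, T0 n m f x = ∑ x ∈ Fs n m, f x := by
  unfold T0
  rw [← Finset.mul_sum, Finset.sum_comm]
  have hj : ∀ j : Fin n, ∑ x ∈ Fs n m,
      (if j.1 < m then f x
       else (f (Function.update x j false) + f (Function.update x j true)) / 2)
      = ∑ x ∈ Fs n m, f x := by
    intro j
    by_cases hjm : j.1 < m
    · simp [hjm]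
    · simp only [hjm, if_false]
      have hj' : m ≤ j.1 := not_lt.mp hjm
      rw [← Finset.sum_div, Finset.sum_add_distrib, sum_update n m f hj' false,
        sum_update n m f hj' true]
      have hsplit : (Fs n m).filter (fun x => ¬ x j = false)
          = (Fs n m).filter (fun x => x j = true) := by
        ext z; simp [Bool.not_eq_false]
      rw [← Finset.sum_filter_add_sum_filter_not (Fs n m) (fun x => x j = false) f, hsplit]
      ring
  rw [Finset.sum_congr rfl (fun j _ => hj j), Finset.sum_const, Finset.card_univ,
    Fintype.card_fin, nsmul_eq_mul]
  field_simp

lemma update_mono {x y : Fin n → Bool} (h : x ≤ y) (j : Fin n) (b : Bool) :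
    Function.update x j b ≤ Function.update y j b := by
  intro i
  by_cases hij : i = j
  · subst hij; rw [Function.update_self, Function.update_self]
  · rw [Function.update_of_ne hij, Function.update_of_ne hij]; exact h i

lemma T0_mono {f : (Fin n → Bool) → ℝ} (hf : Monotone f) : Monotone (T0 n m f) := by
  intro x y hxy
  unfold T0
  apply mul_le_mul_of_nonneg_left _ (by positivity)
  apply Finset.sum_le_sum
  intro j _
  by_cases hjm : j.1 < m
  · simp only [hjm, if_true]; exact hf hxy
  · simp only [hjm, if_false]
    have h1 := hf (update_mono n hxy j false)
    have h2 := hf (update_mono n hxy j true)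
    linarith

lemma T0_iter_avg (hn : 0 < n) (f : (Fin n → Bool) → ℝ) (t : ℕ) :
    ∑ x ∈ Fs n m, (T0 n m)^[t] f x = ∑ x ∈ Fs n m, f x := by
  induction t with
  | zero => simp
  | succ t ih =>
    rw [Function.iterate_succ_apply' (T0 n m) t f]
    rw [T0_avg n m hn]
    exact ih

lemma T0_iter_mono {f : (Fin n → Bool) → ℝ} (hf : Monotone f) (t : ℕ) :
    Monotone ((T0 n m)^[t] f) := by
  induction t with
  | zero => simpa using hf
  | succ t ih =>
    rw [Function.iterate_succ_apply' (T0 n m) t f]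
    exact T0_mono n m ih

lemma x0w_mem : x0w n m ∈ Fs n m := by
  simp only [Fs, Finset.mem_filter, Finset.mem_univ, true_and]
  intro i hi
  simp [x0w, hi]

lemma x0w_le {y : Fin n → Bool} (hy : y ∈ Fs n m) : x0w n m ≤ y := by
  intro i
  by_cases hi : i.1 < m
  · simp only [Fs, Finset.mem_filter, Finset.mem_univ, true_and] at hy
    rw [hy i hi]
    exact le_top
  · simp only [x0w, decide_eq_true_eq]
    simp [hi]

lemma key_avg (hn : 0 < n) {f : (Fin n → Bool) → ℝ} (hf : Monotone f) (t : ℕ) :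
    ((Fs n m).card : ℝ) * (T0 n m)^[t] f (x0w n m) ≤ ∑ x ∈ Fs n m, f x := by
  rw [← T0_iter_avg n m hn f t]
  have hle : ∀ y ∈ Fs n m, (T0 n m)^[t] f (x0w n m) ≤ (T0 n m)^[t] f y :=
    fun y hy => T0_iter_mono n m hf t (x0w_le n m hy)
  have := Finset.card_nsmul_le_sum (Fs n m) ((T0 n m)^[t] f) _ hle
  rwa [nsmul_eq_mul] at this

lemma g0_mono : Monotone (g0 n m) := by
  intro x y h
  unfold g0
  split_ifs with hx hy
  · exact le_refl 1
  · exfalso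
    apply hy
    intro i hi
    have := h i
    rw [hx i hi] at this
    exact Bool.eq_true_of_true_le this
  · norm_num
  · norm_num

lemma g0_nonneg (x : Fin n → Bool) : 0 ≤ g0 n m x := by
  unfold g0; split_ifs <;> norm_num

lemma g0_le_one (x : Fin n → Bool) : g0 n m x ≤ 1 := by
  unfold g0; split_ifs <;> norm_num

lemma sum_g0 (hnm : 2 * m ≤ n) : ∑ x ∈ Fs n m, g0 n m x = (2:ℝ)^(n - 2*m) := by
  unfold g0
  rw [← Finset.sum_filter, Finset.sum_const, nsmul_eq_mul, mul_one]
  have h1 : (Fs n m).filter (fun x => ∀ i : Fin n, i.1 < 2 * m → x i = true)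
      = Finset.univ.filter (fun x : Fin n → Bool => ∀ i ∈ (Finset.univ.filter fun i : Fin n => i.1 < 2*m), x i = true) := by
    ext z
    simp only [Fs, Finset.mem_filter, Finset.mem_univ, true_and, inS]
    constructor
    · rintro ⟨_, h2⟩ i hi
      exact h2 i hi
    · intro h2
      exact ⟨fun i hi => h2 i (by omega), h2⟩
  rw [h1, card_cube, card_filter_lt (2*m) hnm]
  push_cast
  ring

lemma card_Fs (hmn : m ≤ n) : (Fs n m).card = 2^(n - m) := by
  have h1 : Fs n m
      = Finset.univ.filter (fun x : Fin n → Bool => ∀ i ∈ (Finset.univ.filter fun i : Fin n => i.1 < m), x i = true) := by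
    ext z
    simp only [Fs, Finset.mem_filter, Finset.mem_univ, true_and, inS]
  rw [h1, card_cube, card_filter_lt m hmn]

lemma g0_iter_bound (hnm : 2 * m ≤ n) (hm1 : 1 ≤ m) (t : ℕ) :
    (2:ℝ)^m * (T0 n m)^[t] (g0 n m) (x0w n m) ≤ 1 := by
  have hn : 0 < n := by omega
  have hkey := key_avg n m hn (g0_mono n m) t
  rw [sum_g0 n m hnm, card_Fs n m (by omega)] at hkey
  have hexp : n - m = (n - 2*m) + m := by omega
  push_cast at hkey
  rw [hexp, pow_add, mul_assoc] at hkey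
  have hpos : (0:ℝ) < (2:ℝ)^(n-2*m) := by positivity
  exact le_of_mul_le_mul_left (by linarith) hpos

lemma Pe_offdiag_le (hn : 0 < n) {x y : Fin n → Bool} (hne : x ≠ y) :
    Pe n m x y ≤ 1 / (2 * (n:ℝ)) := by
  unfold Pe
  by_cases h1 : x ∈ twoBlocks n m ∧ y ∈ twoBlocks n m
  · rw [if_pos h1, if_neg hne]
    split_ifs
    · exact le_refl _
    · positivity
  · rw [if_neg h1]
    positivity

lemma upd_pair (g : (Fin n → Bool) → ℝ) (x : Fin n → Bool) (j : Fin n) :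
    g (Function.update x j false) + g (Function.update x j true) = g x + g (flip j x) := by
  cases hxj : x j
  · rw [update_self' n hxj, update_flip n (by rw [hxj]; exact Bool.false_ne_true)]
  · rw [update_flip n (by simp [hxj]), update_self' n hxj, add_comm]

lemma T0_apply (hn : 0 < n) (hmn : m ≤ n) (g : (Fin n → Bool) → ℝ) (x : Fin n → Bool) :
    T0 n m g x = (1 - ((n:ℝ) - m) / (2 * n)) * g x
      + (1 / (2 * (n:ℝ))) * ∑ j ∈ Finset.univ.filter (fun j : Fin n => m ≤ j.1), g (flip j x) := by
  unfold T0
  rw [← Finset.sum_filter_add_sum_filter_not Finset.univ (fun j : Fin n => j.1 < m)]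
  have hfe : Finset.univ.filter (fun j : Fin n => ¬ j.1 < m)
      = Finset.univ.filter (fun j : Fin n => m ≤ j.1) := by
    ext j; simp [not_lt]
  have e1 : ∑ j ∈ Finset.univ.filter (fun j : Fin n => j.1 < m),
      (if j.1 < m then g x
       else (g (Function.update x j false) + g (Function.update x j true)) / 2)
      = (m:ℝ) * g x := by
    rw [Finset.sum_congr rfl (fun j hj => if_pos (Finset.mem_filter.mp hj).2),
      Finset.sum_const, card_filter_lt m hmn, nsmul_eq_mul]
  have e2 : ∑ j ∈ Finset.univ.filter (fun j : Fin n => ¬ j.1 < m),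
      (if j.1 < m then g x
       else (g (Function.update x j false) + g (Function.update x j true)) / 2)
      = (((n:ℝ) - m) * g x
         + ∑ j ∈ Finset.univ.filter (fun j : Fin n => m ≤ j.1), g (flip j x)) / 2 := by
    rw [Finset.sum_congr rfl (fun j hj => if_neg (Finset.mem_filter.mp hj).2), hfe]
    rw [Finset.sum_congr rfl (fun j _ => by rw [upd_pair n])]
    rw [← Finset.sum_div, Finset.sum_add_distrib, Finset.sum_const, card_filter_ge m hmn,
      nsmul_eq_mul, Nat.cast_sub hmn]
  rw [e1, e2]
  have hnne : (n:ℝ) ≠ 0 := by positivity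
  field_simp
  ring

lemma step_bound (hn : 0 < n) (hmn : m ≤ n) {x : Fin n → Bool} (hx : inS n m x)
    {g : (Fin n → Bool) → ℝ} (hg : ∀ z, 0 ≤ g z) :
    ∑ y ∈ Fs n m, Pe n m x y * g y ≤ T0 n m g x := by
  have hxF : x ∈ Fs n m := by
    simp only [Fs, Finset.mem_filter, Finset.mem_univ, true_and]; exact hx
  rw [← Finset.add_sum_erase _ _ hxF, T0_apply n m hn hmn g x]
  have hdiag : Pe n m x x * g x ≤ (1 - ((n:ℝ) - m) / (2 * n)) * g x :=
    mul_le_mul_of_nonneg_right (Pe_diag_le n m hmn hx) (hg x)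
  have hoff : ∑ y ∈ (Fs n m).erase x, Pe n m x y * g y
      ≤ (1 / (2 * (n:ℝ)))
        * ∑ j ∈ Finset.univ.filter (fun j : Fin n => m ≤ j.1), g (flip j x) := by
    have himg : ∀ y ∈ (Fs n m).erase x, Pe n m x y * g y
        ≤ (if y ∈ (Finset.univ.filter (fun j : Fin n => m ≤ j.1)).image (fun j => flip j x)
           then (1 / (2 * (n:ℝ))) * g y else 0) := by
      intro y hy
      obtain ⟨hne, hyF⟩ := Finset.mem_erase.mp hy
      split_ifs with hmem
      · exact mul_le_mul_of_nonneg_right (Pe_offdiag_le n m hn (Ne.symm hne)) (hg y)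
      · have hPe0 : Pe n m x y = 0 := by
          have hyS : inS n m y := by
            simpa only [Fs, Finset.mem_filter, Finset.mem_univ, true_and] using hyF
          unfold Pe
          rw [if_pos ⟨inS_mem n m hx, inS_mem n m hyS⟩, if_neg (fun h => hne h.symm)]
          rw [if_neg]
          intro hadj
          obtain ⟨j, rfl⟩ := adjacent_iff.mp hadj
          apply hmem
          refine Finset.mem_image.mpr ⟨j, Finset.mem_filter.mpr ⟨Finset.mem_univ _, ?_⟩, rfl⟩
          by_contra hjm
          have hj : j.1 < m := by omega
          have h1 := hx j hj
          have h2 := hyS j hj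
          rw [flip_apply_self, h1] at h2
          exact absurd h2 (by simp)
        rw [hPe0, zero_mul]
    calc ∑ y ∈ (Fs n m).erase x, Pe n m x y * g y
        ≤ ∑ y ∈ (Fs n m).erase x,
          (if y ∈ (Finset.univ.filter (fun j : Fin n => m ≤ j.1)).image (fun j => flip j x)
           then (1 / (2 * (n:ℝ))) * g y else 0) := Finset.sum_le_sum himg
      _ ≤ ∑ y : Fin n → Bool,
          (if y ∈ (Finset.univ.filter (fun j : Fin n => m ≤ j.1)).image (fun j => flip j x)
           then (1 / (2 * (n:ℝ))) * g y else 0) := by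
          apply Finset.sum_le_sum_of_subset_of_nonneg (Finset.subset_univ _)
          intro y _ _
          split_ifs
          · have := hg y; positivity
          · exact le_refl 0
      _ = ∑ y ∈ (Finset.univ.filter (fun j : Fin n => m ≤ j.1)).image (fun j => flip j x),
           (1 / (2 * (n:ℝ))) * g y := by
          rw [Finset.sum_ite_mem, Finset.univ_inter]
      _ = ∑ j ∈ Finset.univ.filter (fun j : Fin n => m ≤ j.1),
           (1 / (2 * (n:ℝ))) * g (flip j x) := by
          rw [Finset.sum_image (fun a ha b hb h =>
            flip_injOn x (Finset.mem_coe.mpr ha) (Finset.mem_coe.mpr hb) h)]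
      _ = (1 / (2 * (n:ℝ)))
          * ∑ j ∈ Finset.univ.filter (fun j : Fin n => m ≤ j.1), g (flip j x) := by
          rw [Finset.mul_sum]
  linarith

lemma T0_nonneg {g : (Fin n → Bool) → ℝ} (hg : ∀ z, 0 ≤ g z) (x : Fin n → Bool) :
    0 ≤ T0 n m g x := by
  unfold T0
  apply mul_nonneg (by positivity)
  apply Finset.sum_nonneg
  intro j _
  have h1 := hg x
  have h2 := hg (Function.update x j false)
  have h3 := hg (Function.update x j true)
  split_ifs <;> linarith

noncomputable def u : ℕ → (Fin n → Bool) → ℝ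
  | 0 => fun x => if x = x0w n m then 1 else 0
  | (t+1) => fun y =>
      if inS n m y then ∑ x : Fin n → Bool, u t x * Pe n m x y else 0

lemma inS_x0w : inS n m (x0w n m) := fun i hi => by simp [x0w, hi]

lemma u_eq_zero {t : ℕ} {x : Fin n → Bool} (hx : ¬ inS n m x) : u n m t x = 0 := by
  cases t with
  | zero =>
    simp only [u]
    rw [if_neg]
    intro h
    subst h
    exact hx (inS_x0w n m)
  | succ t => simp only [u]; rw [if_neg hx]

lemma u_nonneg (hn : 0 < n) (t : ℕ) : ∀ x, 0 ≤ u n m t x := by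
  induction t with
  | zero =>
    intro x
    simp only [u]
    split_ifs <;> norm_num
  | succ t ih =>
    intro x
    simp only [u]
    split_ifs with h
    · exact Finset.sum_nonneg fun z _ => mul_nonneg (ih z) (Pe_nonneg n m hn z x)
    · exact le_refl 0

lemma Pe_zero_right {x y : Fin n → Bool} (hy : y ∉ twoBlocks n m) : Pe n m x y = 0 := by
  unfold Pe
  rw [if_neg (fun h => hy h.2)]

lemma u_succ_dual (hn : 0 < n) (t : ℕ) (g : (Fin n → Bool) → ℝ) :
    ∑ y : Fin n → Bool, u n m (t+1) y * g y
      = ∑ x : Fin n → Bool, u n m t x * (∑ y ∈ Fs n m, Pe n m x y * g y) := by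
  calc ∑ y : Fin n → Bool, u n m (t+1) y * g y
      = ∑ y : Fin n → Bool,
        (if inS n m y then (∑ x : Fin n → Bool, u n m t x * Pe n m x y) * g y else 0) := by
        refine Finset.sum_congr rfl fun y _ => ?_
        simp only [u]
        split_ifs <;> simp
    _ = ∑ y ∈ Fs n m, (∑ x : Fin n → Bool, u n m t x * Pe n m x y) * g y := by
        rw [Fs, Finset.sum_filter]
    _ = ∑ y ∈ Fs n m, ∑ x : Fin n → Bool, (u n m t x * Pe n m x y) * g y := by
        refine Finset.sum_congr rfl fun y _ => ?_
        rw [Finset.sum_mul]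
    _ = ∑ x : Fin n → Bool, ∑ y ∈ Fs n m, (u n m t x * Pe n m x y) * g y :=
        Finset.sum_comm
    _ = ∑ x : Fin n → Bool, u n m t x * (∑ y ∈ Fs n m, Pe n m x y * g y) := by
        refine Finset.sum_congr rfl fun x _ => ?_
        rw [Finset.mul_sum]
        exact Finset.sum_congr rfl fun y _ => by ring

lemma u_dual (hn : 0 < n) (hmn : m ≤ n) (t : ℕ) :
    ∀ g : (Fin n → Bool) → ℝ, (∀ z, 0 ≤ g z) →
    ∑ x : Fin n → Bool, u n m t x * g x ≤ (T0 n m)^[t] g (x0w n m) := by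
  induction t with
  | zero =>
    intro g hg
    simp only [u, Function.iterate_zero, id_eq, ite_mul, zero_mul, one_mul]
    rw [Finset.sum_ite_eq' Finset.univ (x0w n m) g]
    simp
  | succ t ih =>
    intro g hg
    rw [u_succ_dual n m hn t g, Function.iterate_succ_apply]
    calc ∑ x : Fin n → Bool, u n m t x * (∑ y ∈ Fs n m, Pe n m x y * g y)
        ≤ ∑ x : Fin n → Bool, u n m t x * T0 n m g x := by
          refine Finset.sum_le_sum fun x _ => ?_
          by_cases hxS : inS n m x
          · exact mul_le_mul_of_nonneg_left (step_bound n m hn hmn hxS hg)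
              (u_nonneg n m hn t x)
          · rw [u_eq_zero n m hxS, zero_mul, zero_mul]
      _ ≤ (T0 n m)^[t] (T0 n m g) (x0w n m) := ih _ (T0_nonneg n m (g := g) hg)

lemma row_loss_zero (hn : 0 < n) {x : Fin n → Bool} (hxS : inS n m x)
    (hxB : ¬ inB2 n m x) {y : Fin n → Bool} (hyS : ¬ inS n m y) :
    Pe n m x y = 0 := by
  by_cases hyA : y ∈ twoBlocks n m
  · unfold Pe
    rw [if_pos ⟨inS_mem n m hxS, hyA⟩, if_neg (fun he => hyS (by rw [← he]; exact hxS)), if_neg]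
    intro hadj
    obtain ⟨j, rfl⟩ := adjacent_iff.mp hadj
    by_cases hjm : j.1 < m
    · -- then flip j x ∈ A and not inS, so inB2 (flip j x), hence inB2 x
      have hyB : inB2 n m (flip j x) := by
        rcases (mem_twoBlocks n m).mp hyA with h | h
        · exact absurd h hyS
        · exact h
      apply hxB
      intro i him hi2m
      rw [← flip_apply_ne j i x (by intro h; subst h; omega)]
      exact hyB i him hi2m
    · apply hyS
      intro i hi
      rw [flip_apply_ne j i x (by intro h; subst h; omega)]
      exact hxS i hi
  · exact Pe_zero_right n m hyA

lemma row_le_eps {x : Fin n → Bool} (hn : 0 < n) (hxS : inS n m x)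
    {y : Fin n → Bool} (hyS : ¬ inS n m y) :
    Pe n m x y ≤ (if y ∈ (Finset.univ.filter (fun j : Fin n => j.1 < m)).image
        (fun j => flip j x) then 1 / (2 * (n:ℝ)) else 0) := by
  split_ifs with hmem
  · exact Pe_offdiag_le n m hn (fun he => hyS (by rw [← he]; exact hxS))
  · have h0 : Pe n m x y = 0 := by
      by_cases hyA : y ∈ twoBlocks n m
      · unfold Pe
        rw [if_pos ⟨inS_mem n m hxS, hyA⟩,
          if_neg (fun he => hyS (by rw [← he]; exact hxS)), if_neg]
        intro hadj
        obtain ⟨j, rfl⟩ := adjacent_iff.mp hadj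
        by_cases hjm : j.1 < m
        · exact hmem (Finset.mem_image.mpr
            ⟨j, Finset.mem_filter.mpr ⟨Finset.mem_univ _, hjm⟩, rfl⟩)
        · apply hyS
          intro i hi
          rw [flip_apply_ne j i x (by intro h; subst h; omega)]
          exact hxS i hi
      · exact Pe_zero_right n m hyA
    rw [h0]

lemma row_loss_le (hn : 0 < n) (hnm : 2 * m ≤ n) (hm1 : 1 ≤ m)
    {x : Fin n → Bool} (hxS : inS n m x) :
    ∑ y ∈ Finset.univ.filter (fun y => ¬ inS n m y), Pe n m x y ≤ 1/4 := by
  calc ∑ y ∈ Finset.univ.filter (fun y => ¬ inS n m y), Pe n m x y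
      ≤ ∑ y ∈ Finset.univ.filter (fun y => ¬ inS n m y),
        (if y ∈ (Finset.univ.filter (fun j : Fin n => j.1 < m)).image
          (fun j => flip j x) then 1 / (2 * (n:ℝ)) else 0) := by
        refine Finset.sum_le_sum fun y hy => ?_
        exact row_le_eps n m hn hxS
          (by simpa using (Finset.mem_filter.mp hy).2)
    _ ≤ ∑ y : Fin n → Bool,
        (if y ∈ (Finset.univ.filter (fun j : Fin n => j.1 < m)).image
          (fun j => flip j x) then 1 / (2 * (n:ℝ)) else 0) := by
        apply Finset.sum_le_sum_of_subset_of_nonneg (Finset.subset_univ _)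
        intro y _ _
        split_ifs
        · positivity
        · exact le_refl 0
    _ = ∑ y ∈ (Finset.univ.filter (fun j : Fin n => j.1 < m)).image (fun j => flip j x),
          (1 / (2 * (n:ℝ))) := by
        rw [Finset.sum_ite_mem, Finset.univ_inter]
    _ ≤ (m : ℝ) * (1 / (2 * (n:ℝ))) := by
        rw [Finset.sum_const, nsmul_eq_mul]
        have hc : ((Finset.univ.filter (fun j : Fin n => j.1 < m)).image
            (fun j => flip j x)).card ≤ m := by
          calc _ ≤ (Finset.univ.filter (fun j : Fin n => j.1 < m)).card :=
                Finset.card_image_le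
            _ = m := card_filter_lt m (by omega)
        have : (0:ℝ) ≤ 1 / (2 * (n:ℝ)) := by positivity
        exact mul_le_mul_of_nonneg_right (by exact_mod_cast hc) this
    _ ≤ 1/4 := by
        rw [mul_one_div, div_le_div_iff₀ (by positivity : (0:ℝ) < 2*n) (by norm_num : (0:ℝ) < 4)]
        have hc : (2*(m:ℝ)) ≤ (n:ℝ) := by exact_mod_cast hnm
        linarith

lemma rowFs_eq (hn : 0 < n) {x : Fin n → Bool} (hxA : x ∈ twoBlocks n m) :
    ∑ y ∈ Fs n m, Pe n m x y
      = 1 - ∑ y ∈ Finset.univ.filter (fun y => ¬ inS n m y), Pe n m x y := by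
  have h := Finset.sum_filter_add_sum_filter_not Finset.univ (inS n m) (Pe n m x)
  rw [Pe_rowsum n m hn hxA] at h
  have : Fs n m = Finset.univ.filter (inS n m) := rfl
  rw [this]
  linarith

lemma rowFs_one (hn : 0 < n) {x : Fin n → Bool} (hxS : inS n m x)
    (hxB : ¬ inB2 n m x) : ∑ y ∈ Fs n m, Pe n m x y = 1 := by
  rw [rowFs_eq n m hn (inS_mem n m hxS)]
  have : ∑ y ∈ Finset.univ.filter (fun y => ¬ inS n m y), Pe n m x y = 0 :=
    Finset.sum_eq_zero fun y hy =>
      row_loss_zero n m hn hxS hxB (by simpa using (Finset.mem_filter.mp hy).2)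
  rw [this]
  ring

lemma rowFs_ge (hn : 0 < n) (hnm : 2 * m ≤ n) (hm1 : 1 ≤ m)
    {x : Fin n → Bool} (hxS : inS n m x) :
    3/4 ≤ ∑ y ∈ Fs n m, Pe n m x y := by
  rw [rowFs_eq n m hn (inS_mem n m hxS)]
  have := row_loss_le n m hn hnm hm1 hxS
  linarith

lemma mass_zero : ∑ x : Fin n → Bool, u n m 0 x = 1 := by
  simp only [u]
  rw [Finset.sum_ite_eq' Finset.univ (x0w n m) (fun _ => (1:ℝ))]
  simp

lemma pred2m_iff {x : Fin n → Bool} (hxS : inS n m x) :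
    (∀ i : Fin n, i.1 < 2 * m → x i = true) ↔ inB2 n m x := by
  constructor
  · intro h i h1 h2
    exact h i h2
  · intro h i hi
    by_cases him : i.1 < m
    · exact hxS i him
    · exact h i (by omega) hi

lemma mass_step (hn : 0 < n) (hnm : 2 * m ≤ n) (hm1 : 1 ≤ m) (t : ℕ) :
    ∑ x : Fin n → Bool, u n m t x
      - (1/4) * ∑ x : Fin n → Bool, u n m t x * g0 n m x
      ≤ ∑ x : Fin n → Bool, u n m (t+1) x := by
  have hswap : ∑ y : Fin n → Bool, u n m (t+1) y
      = ∑ x : Fin n → Bool, u n m t x * (∑ y ∈ Fs n m, Pe n m x y) := by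
    have h := u_succ_dual n m hn t (fun _ => (1:ℝ))
    simpa using h
  rw [hswap, Finset.mul_sum, ← Finset.sum_sub_distrib]
  refine Finset.sum_le_sum fun x _ => ?_
  by_cases hxS : inS n m x
  · by_cases hx2 : ∀ i : Fin n, i.1 < 2 * m → x i = true
    · have hg : g0 n m x = 1 := by unfold g0; rw [if_pos hx2]
      have hrow := rowFs_ge n m hn hnm hm1 hxS
      have hu := u_nonneg n m hn t x
      rw [hg]
      nlinarith
    · have hg : g0 n m x = 0 := by unfold g0; rw [if_neg hx2]
      have hxB : ¬ inB2 n m x := fun h => hx2 ((pred2m_iff n m hxS).mpr h)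
      rw [hg, rowFs_one n m hn hxS hxB]
      ring_nf
      exact le_refl _
  · rw [u_eq_zero n m hxS]
    simp

lemma uB_le (hn : 0 < n) (hnm : 2 * m ≤ n) (hm1 : 1 ≤ m) (t : ℕ) :
    ∑ x : Fin n → Bool, u n m t x * g0 n m x ≤ 1 / 2^m := by
  have h1 := u_dual n m hn (by omega) t (g0 n m) (g0_nonneg n m)
  have h2 := g0_iter_bound n m hnm hm1 t
  have hp : (0:ℝ) < 2^m := by positivity
  rw [le_div_iff₀ hp]
  calc (∑ x : Fin n → Bool, u n m t x * g0 n m x) * 2^m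
      ≤ (T0 n m)^[t] (g0 n m) (x0w n m) * 2^m := by
        apply mul_le_mul_of_nonneg_right h1 (le_of_lt hp)
    _ ≤ 1 := by linarith
 
lemma mass_ge (hn : 0 < n) (hnm : 2 * m ≤ n) (hm1 : 1 ≤ m) (t : ℕ) :
    1 - (t:ℝ) * (1 / (2^m * 4)) ≤ ∑ x : Fin n → Bool, u n m t x := by
  induction t with
  | zero => rw [mass_zero]; simp
  | succ t ih =>
    have h1 := mass_step n m hn hnm hm1 t
    have h2 := uB_le n m hn hnm hm1 t
    have hp : (0:ℝ) < 2^m := by positivity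
    have : ((t+1 : ℕ):ℝ) = (t:ℝ) + 1 := by push_cast; ring
    rw [this]
    have hq : (1/4) * ∑ x : Fin n → Bool, u n m t x * g0 n m x ≤ 1 / (2^m*4) := by
      rw [div_mul_eq_div_div]
      linarith
    linarith

lemma Pmat_nonneg (hn : 0 < n) (x y : {z // z ∈ twoBlocks n m}) :
    0 ≤ censoredPmat n (twoBlocks n m) x y := by
  rw [Pe_eq_cens]
  exact Pe_nonneg n m hn _ _

lemma Ppow_nonneg (hn : 0 < n) (t : ℕ) (x y : {z // z ∈ twoBlocks n m}) :
    0 ≤ (censoredPmat n (twoBlocks n m) ^ t) x y := by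
  induction t generalizing x y with
  | zero =>
    rw [pow_zero, Matrix.one_apply]
    split_ifs <;> norm_num
  | succ t ih =>
    rw [pow_succ, Matrix.mul_apply]
    exact Finset.sum_nonneg fun z _ => mul_nonneg (ih x z) (Pmat_nonneg n m hn z y)

lemma Pmat_rowsum (hn : 0 < n) (x : {z // z ∈ twoBlocks n m}) :
    ∑ y : {z // z ∈ twoBlocks n m}, censoredPmat n (twoBlocks n m) x y = 1 := by
  calc ∑ y : {z // z ∈ twoBlocks n m}, censoredPmat n (twoBlocks n m) x y
      = ∑ y : {z // z ∈ twoBlocks n m}, Pe n m ↑x ↑y :=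
        Finset.sum_congr rfl fun y _ => Pe_eq_cens n m x y
    _ = ∑ y ∈ twoBlocks n m, Pe n m ↑x y :=
        Finset.sum_coe_sort (twoBlocks n m) (fun y => Pe n m ↑x y)
    _ = ∑ y : Fin n → Bool, Pe n m ↑x y :=
        Finset.sum_subset (Finset.subset_univ _)
          (fun y _ hy => Pe_zero_right n m hy)
    _ = 1 := Pe_rowsum n m hn x.2

lemma Ppow_rowsum (hn : 0 < n) (t : ℕ) (x : {z // z ∈ twoBlocks n m}) :
    ∑ y : {z // z ∈ twoBlocks n m}, (censoredPmat n (twoBlocks n m) ^ t) x y = 1 := by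
  induction t generalizing x with
  | zero => simp [Matrix.one_apply]
  | succ t ih =>
    calc ∑ y : {z // z ∈ twoBlocks n m}, (censoredPmat n (twoBlocks n m) ^ (t+1)) x y
        = ∑ y : {z // z ∈ twoBlocks n m}, ∑ z : {z // z ∈ twoBlocks n m},
            (censoredPmat n (twoBlocks n m) ^ t) x z * censoredPmat n (twoBlocks n m) z y := by
          refine Finset.sum_congr rfl fun y _ => ?_
          rw [pow_succ, Matrix.mul_apply]
      _ = ∑ z : {z // z ∈ twoBlocks n m}, ∑ y : {z // z ∈ twoBlocks n m},
            (censoredPmat n (twoBlocks n m) ^ t) x z * censoredPmat n (twoBlocks n m) z y :=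
          Finset.sum_comm
      _ = ∑ z : {z // z ∈ twoBlocks n m}, (censoredPmat n (twoBlocks n m) ^ t) x z := by
          refine Finset.sum_congr rfl fun z _ => ?_
          rw [← Finset.mul_sum, Pmat_rowsum n m hn z, mul_one]
      _ = 1 := ih x

lemma u_le_Ppow (hn : 0 < n) (x0 : {z // z ∈ twoBlocks n m})
    (hx0 : (x0 : Fin n → Bool) = x0w n m) (t : ℕ) :
    ∀ y : {z // z ∈ twoBlocks n m},
      u n m t ↑y ≤ (censoredPmat n (twoBlocks n m) ^ t) x0 y := by
  induction t with
  | zero =>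
    intro y
    rw [pow_zero, Matrix.one_apply]
    simp only [u]
    by_cases h : (y : Fin n → Bool) = x0w n m
    · rw [if_pos h, if_pos (Subtype.ext (by rw [hx0, h]))]
    · rw [if_neg h, if_neg (fun he => h (by rw [← he, hx0]))]
  | succ t ih =>
    intro y
    simp only [u]
    by_cases hy : inS n m ↑y
    · rw [if_pos hy]
      have h1 : ∑ x : Fin n → Bool, u n m t x * Pe n m x ↑y
          = ∑ x ∈ twoBlocks n m, u n m t x * Pe n m x ↑y := by
        refine (Finset.sum_subset (Finset.subset_univ _) fun z _ hz => ?_).symm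
        by_cases hzS : inS n m z
        · exact absurd (inS_mem n m hzS) hz
        · rw [u_eq_zero n m hzS, zero_mul]
      rw [h1, ← Finset.sum_coe_sort (twoBlocks n m)
        (fun x => u n m t x * Pe n m x ↑y), pow_succ, Matrix.mul_apply]
      refine Finset.sum_le_sum fun z _ => ?_
      rw [← Pe_eq_cens n m z y]
      exact mul_le_mul_of_nonneg_right (ih z) (Pmat_nonneg n m hn z y)
    · rw [if_neg hy]
      exact Ppow_nonneg n m hn (t+1) x0 y

lemma sum_subtype_filter (f : (Fin n → Bool) → ℝ) :
    ∑ y ∈ Finset.univ.filter (fun y : {z // z ∈ twoBlocks n m} => inS n m ↑y), f ↑y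
      = ∑ y ∈ (twoBlocks n m).filter (fun z => inS n m z), f y := by
  calc ∑ y ∈ Finset.univ.filter (fun y : {z // z ∈ twoBlocks n m} => inS n m ↑y), f ↑y
      = ∑ y : {z // z ∈ twoBlocks n m},
          (fun z => if inS n m z then f z else 0) ↑y := by
        rw [Finset.sum_filter]
    _ = ∑ y ∈ twoBlocks n m, (if inS n m y then f y else 0) :=
        Finset.sum_coe_sort (twoBlocks n m) (fun z => if inS n m z then f z else 0)
    _ = ∑ y ∈ (twoBlocks n m).filter (fun z => inS n m z), f y :=
        (Finset.sum_filter _ _).symm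

lemma filter_A_inS : (twoBlocks n m).filter (fun z => inS n m z) = Fs n m := by
  ext z
  simp only [Finset.mem_filter, Fs, Finset.mem_univ, true_and]
  exact ⟨fun h => h.2, fun h => ⟨inS_mem n m h, h⟩⟩

lemma card_filter_mid (hnm : 2 * m ≤ n) :
    (Finset.univ.filter fun i : Fin n => m ≤ i.1 ∧ i.1 < 2 * m).card = m := by
  have h : (Finset.univ.filter fun i : Fin n => m ≤ i.1 ∧ i.1 < 2 * m)
      = Finset.attachFin (Finset.Ico m (2*m))
        (fun r hr => by have := Finset.mem_Ico.mp hr; omega) := by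
    ext i
    simp [Finset.mem_attachFin, Finset.mem_Ico]
  rw [h, Finset.card_attachFin, Nat.card_Ico]
  omega

lemma card_G (hnm : 2 * m ≤ n) :
    (Finset.univ.filter (inB2 n m)).card = 2^(n - m) := by
  have h1 : Finset.univ.filter (inB2 n m)
      = Finset.univ.filter (fun x : Fin n → Bool =>
          ∀ i ∈ (Finset.univ.filter fun i : Fin n => m ≤ i.1 ∧ i.1 < 2 * m), x i = true) := by
    ext z
    simp only [Finset.mem_filter, Finset.mem_univ, true_and, inB2]
    constructor
    · intro h i hi
      exact h i hi.1 hi.2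
    · intro h i h1 h2
      exact h i ⟨h1, h2⟩
  rw [h1, card_cube, card_filter_mid n m hnm]

lemma card_FG (hnm : 2 * m ≤ n) :
    (Finset.univ.filter (fun x => inS n m x ∧ inB2 n m x)).card = 2^(n - 2*m) := by
  have h1 : Finset.univ.filter (fun x => inS n m x ∧ inB2 n m x)
      = Finset.univ.filter (fun x : Fin n → Bool =>
          ∀ i ∈ (Finset.univ.filter fun i : Fin n => i.1 < 2 * m), x i = true) := by
    ext z
    simp only [Finset.mem_filter, Finset.mem_univ, true_and]
    unfold inS inB2
    constructor
    · rintro ⟨h1, h2⟩ i hi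
      by_cases him : i.1 < m
      · exact h1 i him
      · exact h2 i (by omega) hi
    · intro h
      exact ⟨fun i hi => h i (by omega), fun i h1 h2 => h i h2⟩
  rw [h1, card_cube, card_filter_lt (2*m) hnm]

lemma card_A (hnm : 2 * m ≤ n) :
    (twoBlocks n m).card + 2^(n - 2*m) = 2^(n - m) + 2^(n - m) := by
  have h1 : twoBlocks n m = Finset.univ.filter (inS n m) ∪ Finset.univ.filter (inB2 n m) := by
    rw [← Finset.filter_or]
    rfl
  have h2 : Finset.univ.filter (inS n m) ∩ Finset.univ.filter (inB2 n m)
      = Finset.univ.filter (fun x => inS n m x ∧ inB2 n m x) := by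
    rw [Finset.filter_and]
  have h3 := Finset.card_union_add_card_inter
    (Finset.univ.filter (inS n m)) (Finset.univ.filter (inB2 n m))
  rw [h2, card_FG n m hnm, card_G n m hnm] at h3
  have h4 : (Finset.univ.filter (inS n m)).card = 2^(n-m) := card_Fs n m (by omega)
  rw [h4] at h3
  rw [h1]
  omega

end Main
end CCML

/-- Lower bound on the mixing time of the censored Glauber chain on
`A = {x : x_1 = ⋯ = x_m = 1} ∪ {x : x_{m+1} = ⋯ = x_{2m} = 1}` with
`n ≥ 2m`, `m ≥ 5`: started from the point `x_0` with `x_i = 1` exactly for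
`i ≤ m`, after any `t < 2^{m-4}` steps the total variation distance to the
uniform distribution on `A` still exceeds `1/4`. -/
theorem censored_chain_mixing_lower {n m : ℕ} (hm : 5 ≤ m) (hnm : 2 * m ≤ n)
    (t : ℕ) (ht : t < 2 ^ (m - 4))
    (x0 : {x // x ∈ twoBlocks n m})
    (hx0 : (x0 : Fin n → Bool) = fun i => decide (i.1 < m)) :
    (1 / 2) * ∑ y : {x // x ∈ twoBlocks n m},
        |(censoredPmat n (twoBlocks n m) ^ t) x0 y - 1 / ((twoBlocks n m).card : ℝ)|
      > 1 / 4 := by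
  classical
  have hm1 : 1 ≤ m := by omega
  have hn : 0 < n := by omega
  have hx0w : (x0 : Fin n → Bool) = CCML.x0w n m := hx0
  set P1 := censoredPmat n (twoBlocks n m) ^ t with hP1
  set c : ℝ := 1 / ((twoBlocks n m).card : ℝ) with hc
  have hA0 : 0 < (twoBlocks n m).card := Finset.card_pos.mpr ⟨↑x0, x0.2⟩
  -- total sums
  have hsum_a : ∑ y : {z // z ∈ twoBlocks n m}, P1 x0 y = 1 :=
    CCML.Ppow_rowsum n m hn t x0
  have hsum_c : ∑ _y : {z // z ∈ twoBlocks n m}, c = 1 := by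
    rw [Finset.sum_const, nsmul_eq_mul, Finset.card_univ, Fintype.card_coe, hc]
    field_simp
  -- lower bound on  ∑_{y ∈ S} P1 x0 y
  have hSA : (63:ℝ)/64 ≤ ∑ y ∈ Finset.univ.filter (fun y : {z // z ∈ twoBlocks n m} => CCML.inS n m ↑y), P1 x0 y := by
    have h1 : ∑ y ∈ Finset.univ.filter (fun y : {z // z ∈ twoBlocks n m} => CCML.inS n m ↑y), CCML.u n m t ↑y
        ≤ ∑ y ∈ Finset.univ.filter (fun y : {z // z ∈ twoBlocks n m} => CCML.inS n m ↑y), P1 x0 y :=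
      Finset.sum_le_sum fun y _ => CCML.u_le_Ppow n m hn x0 hx0w t y
    have h2 : ∑ y ∈ Finset.univ.filter (fun y : {z // z ∈ twoBlocks n m} => CCML.inS n m ↑y), CCML.u n m t ↑y
        = ∑ x : Fin n → Bool, CCML.u n m t x := by
      rw [CCML.sum_subtype_filter n m (CCML.u n m t), CCML.filter_A_inS n m]
      refine Finset.sum_subset (Finset.subset_univ _) fun z _ hz => ?_
      refine CCML.u_eq_zero n m fun hzS => hz ?_
      simp only [CCML.Fs, Finset.mem_filter, Finset.mem_univ, true_and]
      exact hzS
    have h3 := CCML.mass_ge n m hn hnm hm1 t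
    have hbound : (t:ℝ) * (1/(2^m*4)) ≤ 1/64 := by
      have hm4 : m - 4 + 4 = m := by omega
      have hp4 : (2:ℝ)^m = 2^(m-4) * 16 := by
        rw [← hm4, pow_add]
        norm_num
      have ht' : (t:ℝ) ≤ (2:ℝ)^(m-4) := by
        have : (t:ℝ) ≤ ((2^(m-4) : ℕ) : ℝ) := by exact_mod_cast le_of_lt ht
        simpa using this
      have hpos : (0:ℝ) < 2^(m-4) := by positivity
      calc (t:ℝ) * (1/(2^m*4)) ≤ (2:ℝ)^(m-4) * (1/(2^m*4)) := by
            apply mul_le_mul_of_nonneg_right ht' (by positivity)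
        _ = 1/64 := by
            rw [hp4]
            field_simp
            ring
    linarith
  -- upper bound on  ∑_{y ∈ S} c
  have hSC : ∑ _y ∈ Finset.univ.filter (fun y : {z // z ∈ twoBlocks n m} => CCML.inS n m ↑y), c ≤ (33:ℝ)/64 := by
    have h1 : ∑ _y ∈ Finset.univ.filter (fun y : {z // z ∈ twoBlocks n m} => CCML.inS n m ↑y), c = ((CCML.Fs n m).card : ℝ) * c := by
      rw [CCML.sum_subtype_filter n m (fun _ => c), CCML.filter_A_inS n m,
        Finset.sum_const, nsmul_eq_mul]
    have hX : (CCML.Fs n m).card = 2^(n-m) := CCML.card_Fs n m (by omega)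
    have hcardA := CCML.card_A n m hnm
    have hXY : (2:ℕ)^(n-m) = 2^m * 2^(n-2*m) := by
      rw [← pow_add]
      congr 1
      omega
    have h2m : (32:ℕ) ≤ 2^m := by
      calc (32:ℕ) = 2^5 := by norm_num
        _ ≤ 2^m := Nat.pow_le_pow_right (by norm_num) hm
    have hkey : 64 * 2^(n-m) ≤ 33 * (twoBlocks n m).card := by
      have h1' : 33 * 2^(n-2*m) ≤ 2 * 2^(n-m) := by
        calc 33 * 2^(n-2*m) ≤ 64 * 2^(n-2*m) :=
              Nat.mul_le_mul_right _ (by norm_num)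
          _ = 2 * 32 * 2^(n-2*m) := by ring
          _ ≤ 2 * 2^m * 2^(n-2*m) :=
              Nat.mul_le_mul_right _ (Nat.mul_le_mul_left 2 h2m)
          _ = 2 * 2^(n-m) := by rw [hXY]; ring
      omega
    rw [h1, hX, hc, mul_one_div]
    rw [div_le_div_iff₀ (by exact_mod_cast hA0) (by norm_num : (0:ℝ) < 64)]
    have hcast : (64:ℝ) * (2^(n-m) : ℕ) ≤ 33 * ((twoBlocks n m).card : ℝ) := by
      exact_mod_cast hkey
    push_cast at hcast ⊢
    linarith
  -- split the absolute sum
  have habs := Finset.sum_filter_add_sum_filter_not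
    (Finset.univ : Finset {z // z ∈ twoBlocks n m})
    (fun y => CCML.inS n m ↑y) (fun y => |P1 x0 y - c|)
  have hfa := Finset.sum_filter_add_sum_filter_not
    (Finset.univ : Finset {z // z ∈ twoBlocks n m})
    (fun y => CCML.inS n m ↑y) (fun y => P1 x0 y)
  have hfc := Finset.sum_filter_add_sum_filter_not
    (Finset.univ : Finset {z // z ∈ twoBlocks n m})
    (fun y => CCML.inS n m ↑y) (fun _y => c)
  have hup : ∑ y ∈ Finset.univ.filter (fun y : {z // z ∈ twoBlocks n m} => CCML.inS n m ↑y), (P1 x0 y - c)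
      ≤ ∑ y ∈ Finset.univ.filter (fun y : {z // z ∈ twoBlocks n m} => CCML.inS n m ↑y), |P1 x0 y - c| :=
    Finset.sum_le_sum fun y _ => le_abs_self _
  have hdown : ∑ y ∈ Finset.univ.filter (fun y : {z // z ∈ twoBlocks n m} => ¬ CCML.inS n m ↑y), (c - P1 x0 y)
      ≤ ∑ y ∈ Finset.univ.filter (fun y : {z // z ∈ twoBlocks n m} => ¬ CCML.inS n m ↑y), |P1 x0 y - c| :=
    Finset.sum_le_sum fun y _ => by rw [abs_sub_comm]; exact le_abs_self _
  rw [Finset.sum_sub_distrib] at hup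
  rw [Finset.sum_sub_distrib] at hdown
  rw [hsum_a] at hfa
  rw [hsum_c] at hfc
  linarith
end
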